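/- arXiv:1912.10091 — 5 statements merged into one kernel-verified Lean document; each statement's English description precedes it below -/
import Mathlib

section
/- For every d ≥ 1 and R > 0, the integral over the ball B(0,R) ⊂ ℝ^d of |x|²/(x₁² + |x|⁴) dx is finite, where x₁ denotes the first coordinate of x. -/
open MeasureTheory

open Set

lemma aux_abs_rpow_int {R c : ℝ} (hR : 0 < R) (hc0 : 0 ≤ c) (hc : c < 1) :
    IntegrableOn (fun t : ℝ => |t| ^ (-c)) (Ioo (-R) R) := by
  have h1 : IntervalIntegrable (fun t : ℝ => |t| ^ (-c)) volume 0 R := by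
    rw [intervalIntegrable_iff_integrableOn_Ioo_of_le hR.le]
    exact ((intervalIntegral.integrableOn_Ioo_rpow_iff (s := -c) hR).2 (by linarith)).congr_fun
      (fun t ht => by rw [abs_of_pos ht.1]) measurableSet_Ioo
  have h2 : IntervalIntegrable (fun t : ℝ => |t| ^ (-c)) volume (-R) 0 := by
    rw [IntervalIntegrable.iff_comp_neg]
    simpa [abs_neg] using h1.symm
  have h3 := h2.trans h1
  rwa [intervalIntegrable_iff_integrableOn_Ioo_of_le (by linarith)] at h3

lemma aux_bound {a b r : ℝ} (ha : 0 < a) (hb : 0 < b) (hbr : b ≤ r) :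
    r ^ 2 / (a ^ 2 + r ^ 4) ≤ a ^ (-(3/4 : ℝ)) * b ^ (-(1/2 : ℝ)) := by
  have hr : 0 < r := hb.trans_le hbr
  have key : a ^ ((3:ℝ)/4) * r ^ ((5:ℝ)/2) ≤ a ^ 2 + r ^ 4 := by
    calc a ^ ((3:ℝ)/4) * r ^ ((5:ℝ)/2)
        = (a ^ 2) ^ ((3:ℝ)/8) * (r ^ 4) ^ ((5:ℝ)/8) := by
          rw [← Real.rpow_natCast a 2, ← Real.rpow_natCast r 4,
            ← Real.rpow_mul ha.le, ← Real.rpow_mul hr.le]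
          norm_num
      _ ≤ 3/8 * a ^ 2 + 5/8 * r ^ 4 :=
          Real.geom_mean_le_arith_mean2_weighted (by norm_num) (by norm_num)
            (by positivity) (by positivity) (by norm_num)
      _ ≤ a ^ 2 + r ^ 4 := by nlinarith [sq_nonneg a, pow_pos hr 4]
  have hA : (0:ℝ) < a ^ ((3:ℝ)/4) * r ^ ((5:ℝ)/2) := by positivity
  calc r ^ 2 / (a ^ 2 + r ^ 4) ≤ r ^ 2 / (a ^ ((3:ℝ)/4) * r ^ ((5:ℝ)/2)) := by
        gcongr
    _ = a ^ (-(3/4:ℝ)) * r ^ (-(1/2:ℝ)) := by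
        rw [mul_comm (a ^ ((3:ℝ)/4)), ← div_div, ← Real.rpow_natCast r 2,
          ← Real.rpow_sub hr, Real.rpow_neg ha.le, div_eq_mul_inv, mul_comm]
        norm_num
    _ ≤ a ^ (-(3/4:ℝ)) * b ^ (-(1/2:ℝ)) := by
        refine mul_le_mul_of_nonneg_left ?_ (Real.rpow_nonneg ha.le _)
        exact Real.rpow_le_rpow_of_nonpos hb hbr (by norm_num)

/-- For every `d ≥ 1` and `R > 0`, the function
`x ↦ |x|² / (x₁² + |x|⁴)` is integrable on the open Euclidean ball `B(0,R) ⊆ ℝ^d`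
(i.e. its integral over the ball is finite). -/
theorem stmt_1 (d : ℕ) (hd : 0 < d) (R : ℝ) (hR : 0 < R) :
    IntegrableOn
      (fun x : EuclideanSpace ℝ (Fin d) => ‖x‖ ^ 2 / ((x ⟨0, hd⟩) ^ 2 + ‖x‖ ^ 4))
      (Metric.ball 0 R) := by
  have hmeas : AEStronglyMeasurable
      (fun x : EuclideanSpace ℝ (Fin d) => ‖x‖ ^ 2 / ((x ⟨0, hd⟩) ^ 2 + ‖x‖ ^ 4))
      (volume.restrict (Metric.ball 0 R)) := by
    apply Measurable.aestronglyMeasurable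
    exact (measurable_norm.pow_const 2).div
      ((((EuclideanSpace.proj (⟨0, hd⟩ : Fin d)).continuous.measurable).pow_const 2).add
        (measurable_norm.pow_const 4))
  have hcoord : ∀ (x : EuclideanSpace ℝ (Fin d)) (i : Fin d), |x i| ≤ ‖x‖ := by
    intro x i
    have h1 : |x i| ^ 2 ≤ ‖x‖ ^ 2 := by
      rw [EuclideanSpace.norm_eq, Real.sq_sqrt (by positivity)]
      exact Finset.single_le_sum (f := fun j => |x j| ^ 2) (fun j _ => sq_nonneg _)
        (Finset.mem_univ i)
    calc |x i| = Real.sqrt (|x i| ^ 2) := (Real.sqrt_sq (abs_nonneg _)).symm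
      _ ≤ Real.sqrt (‖x‖ ^ 2) := Real.sqrt_le_sqrt h1
      _ = ‖x‖ := Real.sqrt_sq (norm_nonneg _)
  rcases Nat.lt_or_ge d 2 with hd2 | hd2
  · -- d = 1
    have hd1 : d = 1 := by omega
    subst hd1
    refine Integrable.mono' (g := fun _ => (1:ℝ))
      (integrableOn_const measure_ball_lt_top.ne) hmeas ?_
    refine Filter.Eventually.of_forall fun x => ?_
    have hx : (x ⟨0, hd⟩ : ℝ) ^ 2 = ‖x‖ ^ 2 := by
      rw [EuclideanSpace.norm_eq, Real.sq_sqrt (by positivity), Fin.sum_univ_one]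
      norm_num [Real.norm_eq_abs, sq_abs]
      rfl
    rw [Real.norm_eq_abs, abs_of_nonneg (by positivity), hx]
    exact div_le_one_of_le₀ (by nlinarith [pow_nonneg (norm_nonneg x) 4, sq_nonneg ‖x‖])
      (by positivity)
  · -- d ≥ 2
    set i0 : Fin d := ⟨0, hd⟩ with hi0
    set i1 : Fin d := ⟨1, by omega⟩ with hi1
    have hne : i1 ≠ i0 := by simp [hi0, hi1, Fin.ext_iff]
    set c : Fin d → ℝ := fun i => if i = i0 then 3/4 else if i = i1 then 1/2 else 0 with hc
    set F : Fin d → ℝ → ℝ := fun i => (Ioo (-R) R).indicator (fun t => |t| ^ (-(c i))) with hF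
    have hFint : ∀ i, Integrable (F i) := by
      intro i
      rw [hF]
      rw [integrable_indicator_iff measurableSet_Ioo]
      refine aux_abs_rpow_int hR ?_ ?_ <;>
        · simp only [hc]; split_ifs <;> norm_num
    have hG : Integrable (fun y : Fin d → ℝ => ∏ i, F i (y i)) := Integrable.fin_nat_prod hFint
    have hGE : Integrable (fun x : EuclideanSpace ℝ (Fin d) => ∏ i, F i (x i)) :=
      ((EuclideanSpace.volume_preserving_symm_measurableEquiv_toLp (Fin d)).integrable_comp_emb
        (MeasurableEquiv.toLp 2 (Fin d → ℝ)).symm.measurableEmbedding).2 hG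
    have hnull : ∀ i : Fin d, (volume : Measure (EuclideanSpace ℝ (Fin d))) {x | x i = 0} = 0 := by
      intro i
      have hs : MeasurableSet {y : Fin d → ℝ | y i = 0} :=
        measurableSet_eq_fun (measurable_pi_apply i) measurable_const
      calc (volume : Measure (EuclideanSpace ℝ (Fin d))) {x | x i = 0}
          = (volume : Measure (Fin d → ℝ)) {y | y i = 0} :=
            (EuclideanSpace.volume_preserving_symm_measurableEquiv_toLp (Fin d)).measure_preimage
              hs.nullMeasurableSet
        _ = 0 := by rw [volume_pi]; exact Measure.pi_hyperplane _ i 0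
    have h0 : ∀ᵐ x : EuclideanSpace ℝ (Fin d), x i0 ≠ 0 := by
      rw [ae_iff]; simpa using hnull i0
    have h1 : ∀ᵐ x : EuclideanSpace ℝ (Fin d), x i1 ≠ 0 := by
      rw [ae_iff]; simpa using hnull i1
    refine Integrable.mono' hGE.restrict hmeas ?_
    filter_upwards [ae_restrict_of_ae h0, ae_restrict_of_ae h1,
      ae_restrict_mem measurableSet_ball] with x hx0 hx1 hxmem
    have hxR : ∀ i, x i ∈ Ioo (-R) R := by
      intro i
      have hxn : ‖x‖ < R := by simpa [mem_ball_zero_iff] using hxmem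
      exact abs_lt.1 (lt_of_le_of_lt (hcoord x i) hxn)
    have hFx : ∀ i, F i (x i) = |x i| ^ (-(c i)) := fun i => indicator_of_mem (hxR i) _
    have hprod : ∏ i, F i (x i) = |x i0| ^ (-(3/4:ℝ)) * |x i1| ^ (-(1/2:ℝ)) := by
      have e0 : c i0 = 3/4 := by simp [hc]
      have e1 : c i1 = 1/2 := by simp [hc, hne]
      calc ∏ i, F i (x i)
          = F i0 (x i0) * ∏ i ∈ Finset.univ.erase i0, F i (x i) :=
            (Finset.mul_prod_erase _ _ (Finset.mem_univ i0)).symm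
        _ = F i0 (x i0) * (F i1 (x i1) * ∏ i ∈ (Finset.univ.erase i0).erase i1, F i (x i)) := by
            rw [← Finset.mul_prod_erase _ _ (Finset.mem_erase.2 ⟨hne, Finset.mem_univ i1⟩)]
        _ = |x i0| ^ (-(3/4:ℝ)) * |x i1| ^ (-(1/2:ℝ)) := by
            have hrest : ∏ i ∈ (Finset.univ.erase i0).erase i1, F i (x i) = 1 := by
              refine Finset.prod_eq_one fun i hi => ?_
              rcases Finset.mem_erase.1 hi with ⟨hne1, hi'⟩
              rcases Finset.mem_erase.1 hi' with ⟨hne0, _⟩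
              rw [hFx i]
              have : c i = 0 := by simp [hc, hne0, hne1]
              rw [this, neg_zero, Real.rpow_zero]
            rw [hrest, mul_one, hFx i0, hFx i1, e0, e1]
    rw [hprod]
    have hfnn : (0:ℝ) ≤ ‖x‖ ^ 2 / ((x i0) ^ 2 + ‖x‖ ^ 4) := by positivity
    rw [Real.norm_eq_abs, abs_of_nonneg hfnn, ← sq_abs (x i0)]
    exact aux_bound (abs_pos.2 hx0) (abs_pos.2 hx1) (hcoord x i1)
end

section
/- With s(r,κ) as defined by s(r,κ) = √((r² + √(r⁴ + r²κ²))/2) − i·rκ/(√2·√(r² + √(r⁴ + r²κ²))) for r > 0 and s(0,κ)=0, one has for all (r,κ) ∈ (0,∞) × ℝ: 0 ≤ Re(s(r,κ)) − r ≤ κ²/(8r), and 0 ≤ −sgn(κ)·Im(s(r,κ)) ≤ |κ|/2. -/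
/-- With `s(r,κ)` as in Statement 2, for all `(r,κ) ∈ (0,∞) × ℝ` one has
`0 ≤ Re(s(r,κ)) − r ≤ κ²/(8r)` and `0 ≤ −sgn(κ)·Im(s(r,κ)) ≤ |κ|/2`. -/
theorem stmt_3 (S : ℝ → ℝ → ℂ)
    (hS : ∀ r κ : ℝ, 0 < r →
      S r κ = (Real.sqrt ((r ^ 2 + Real.sqrt (r ^ 4 + r ^ 2 * κ ^ 2)) / 2) : ℝ)
        - Complex.I *
          ((r * κ / (Real.sqrt 2 * Real.sqrt (r ^ 2 + Real.sqrt (r ^ 4 + r ^ 2 * κ ^ 2)))) : ℝ))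
    (hS0 : ∀ κ : ℝ, S 0 κ = 0) :
    ∀ r κ : ℝ, 0 < r →
      (0 ≤ (S r κ).re - r ∧ (S r κ).re - r ≤ κ ^ 2 / (8 * r)) ∧
      (0 ≤ -Real.sign κ * (S r κ).im ∧ -Real.sign κ * (S r κ).im ≤ |κ| / 2) := by
  intro r κ hr
  set B := Real.sqrt (r ^ 4 + r ^ 2 * κ ^ 2) with hBdef
  have hBnn : 0 ≤ B := Real.sqrt_nonneg _
  have hBsq : B ^ 2 = r ^ 4 + r ^ 2 * κ ^ 2 := Real.sq_sqrt (by positivity)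
  have hB1 : r ^ 2 ≤ B := by nlinarith [sq_nonneg (B - r ^ 2), sq_nonneg (B + r ^ 2), sq_nonneg (r * κ)]
  have hB2 : B ≤ r ^ 2 + κ ^ 2 / 2 := by nlinarith [sq_nonneg (B + r ^ 2 + κ ^ 2 / 2), sq_nonneg κ]
  have hre : (S r κ).re = Real.sqrt ((r ^ 2 + B) / 2) := by
    rw [hS r κ hr]; simp [-Complex.ofReal_div, -Complex.ofReal_mul]; rfl
  have him : (S r κ).im = -(r * κ / (Real.sqrt 2 * Real.sqrt (r ^ 2 + B))) := by
    rw [hS r κ hr]; simp [-Complex.ofReal_div, -Complex.ofReal_mul]; rfl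
  constructor
  · constructor
    · have h := Real.sqrt_le_sqrt (show r ^ 2 ≤ (r ^ 2 + B) / 2 by linarith)
      rw [Real.sqrt_sq hr.le] at h
      rw [hre]; linarith
    · have h := Real.sqrt_le_sqrt
        (show (r ^ 2 + B) / 2 ≤ (r + κ ^ 2 / (8 * r)) ^ 2 by
          have h8 : (0:ℝ) < 8 * r := by positivity
          have : κ ^ 2 / (8 * r) * (8 * r) = κ ^ 2 := div_mul_cancel₀ _ (ne_of_gt h8)
          nlinarith [sq_nonneg (κ ^ 2 / (8 * r))])
      rw [Real.sqrt_sq (by positivity)] at h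
      rw [hre]; linarith
  · have hA : (0:ℝ) < r ^ 2 + B := by positivity
    have hDeq : Real.sqrt 2 * Real.sqrt (r ^ 2 + B) = Real.sqrt (2 * (r ^ 2 + B)) :=
      (Real.sqrt_mul (by norm_num) _).symm
    have hD2r : 2 * r ≤ Real.sqrt 2 * Real.sqrt (r ^ 2 + B) := by
      rw [hDeq]
      have h := Real.sqrt_le_sqrt (show (2 * r) ^ 2 ≤ 2 * (r ^ 2 + B) by nlinarith)
      rwa [Real.sqrt_sq (by positivity)] at h
    have hDpos : 0 < Real.sqrt 2 * Real.sqrt (r ^ 2 + B) := lt_of_lt_of_le (by positivity) hD2r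
    have hsk : Real.sign κ * κ = |κ| := by
      rcases lt_trichotomy κ 0 with h | h | h
      · rw [Real.sign_of_neg h, abs_of_neg h]; ring
      · simp [h]
      · rw [Real.sign_of_pos h, abs_of_pos h]; ring
    have key : -Real.sign κ * (S r κ).im
        = r * |κ| / (Real.sqrt 2 * Real.sqrt (r ^ 2 + B)) := by
      rw [him, ← hsk]; ring
    constructor
    · rw [key]; positivity
    · rw [key, div_le_iff₀ hDpos]
      nlinarith [abs_nonneg κ]
end

section
/- Define for s ≥ 0 the weight ω_s(ξ) = (ξ₁² + |ξ|⁴)/|ξ|² for |ξ| < 1 and ω_s(ξ) = (1+|ξ|²)^s for |ξ| ≥ 1, and the space X^s(ℝ^d) of real tempered distributions f with f̂ ∈ L¹_loc and ‖f‖²_{X^s} = ∫ ω_s(ξ)|f̂(ξ)|² dξ < ∞. Then for d = 1, X^s(ℝ) = H^s(ℝ) with equivalent norms; and for d ≥ 2, H^s(ℝ^d) ⊂ X^s(ℝ^d) with ‖f‖_{X^s} ≤ 2‖f‖_{H^s} for all f ∈ H^s(ℝ^d), and this inclusion is strict. -/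
open MeasureTheory
open scoped ENNReal NNReal ComplexConjugate

/-- The anisotropic weight `ω_s` on `ℝ` (`ξ₁ = ξ` when `d = 1`). -/
noncomputable def omega1 (s : ℝ) (ξ : ℝ) : ℝ :=
  if |ξ| < 1 then (ξ ^ 2 + ξ ^ 4) / ξ ^ 2 else (1 + ξ ^ 2) ^ s

/-- The anisotropic weight `ω_s(ξ) = (ξ₁² + |ξ|⁴)/|ξ|²` for `|ξ| < 1` and
`(1+|ξ|²)^s` for `|ξ| ≥ 1`, defining the specialized space `X^s(ℝ^d)`. -/
noncomputable def omegaD (d : ℕ) (hd : 0 < d) (s : ℝ) (ξ : EuclideanSpace ℝ (Fin d)) : ℝ :=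
  if ‖ξ‖ < 1 then ((ξ ⟨0, hd⟩) ^ 2 + ‖ξ‖ ^ 4) / ‖ξ‖ ^ 2 else (1 + ‖ξ‖ ^ 2) ^ s

lemma euclid_norm_sq_eq {d : ℕ} (ξ : EuclideanSpace ℝ (Fin d)) : ‖ξ‖ ^ 2 = ∑ j, (ξ j) ^ 2 := by
  rw [EuclideanSpace.norm_eq, Real.sq_sqrt (by positivity)]
  simp [Real.norm_eq_abs, sq_abs]

lemma coord_sq_le {d : ℕ} (ξ : EuclideanSpace ℝ (Fin d)) (j : Fin d) : (ξ j) ^ 2 ≤ ‖ξ‖ ^ 2 := by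
  rw [euclid_norm_sq_eq]
  exact Finset.single_le_sum (f := fun i => (ξ i)^2) (fun i _ => by positivity) (Finset.mem_univ j)

lemma part1 (s : ℝ) (hs : 0 ≤ s) : ∃ c : ℝ, 0 < c ∧ ∀ F : ℝ → ℂ,
    ENNReal.ofReal c⁻¹ *
        (∫⁻ ξ, ENNReal.ofReal ((1 + ξ ^ 2) ^ s) * (‖F ξ‖₊ : ℝ≥0∞) ^ 2)
      ≤ (∫⁻ ξ, ENNReal.ofReal (omega1 s ξ) * (‖F ξ‖₊ : ℝ≥0∞) ^ 2) ∧
    (∫⁻ ξ, ENNReal.ofReal (omega1 s ξ) * (‖F ξ‖₊ : ℝ≥0∞) ^ 2)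
      ≤ ENNReal.ofReal c *
          ∫⁻ ξ, ENNReal.ofReal ((1 + ξ ^ 2) ^ s) * (‖F ξ‖₊ : ℝ≥0∞) ^ 2 := by
  refine ⟨(2:ℝ) ^ (s+1), Real.rpow_pos_of_pos two_pos _, fun F => ?_⟩
  set c : ℝ := (2:ℝ) ^ (s+1) with hc
  have hcpos : 0 < c := Real.rpow_pos_of_pos two_pos _
  have hc2 : c = 2 ^ s * 2 := by rw [hc, Real.rpow_add two_pos, Real.rpow_one]
  have hp : 0 < (2:ℝ) ^ s := Real.rpow_pos_of_pos two_pos _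
  have h0 : ∀ᵐ ξ : ℝ, ξ ≠ 0 := by
    rw [MeasureTheory.ae_iff]
    have : {a : ℝ | ¬ a ≠ 0} = {(0:ℝ)} := by ext a; simp
    rw [this]; exact measure_singleton 0
  have hA : ∀ ξ : ℝ, ξ ≠ 0 → c⁻¹ * (1 + ξ ^ 2) ^ s ≤ omega1 s ξ := by
    intro ξ hξ
    have hb : (1:ℝ) ≤ 1 + ξ^2 := by nlinarith [sq_nonneg ξ]
    unfold omega1; split_ifs with h
    · have habs := abs_lt.mp h
      have hsq : ξ^2 ≤ 1 := by nlinarith [abs_nonneg ξ, sq_abs ξ]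
      have heq : (ξ ^ 2 + ξ ^ 4) / ξ ^ 2 = 1 + ξ ^ 2 := by
        field_simp
      rw [heq]
      have h1 : (1 + ξ^2) ^ s ≤ (2:ℝ) ^ s :=
        Real.rpow_le_rpow (by linarith) (by linarith) hs
      rw [hc2, inv_mul_le_iff₀ (by positivity)]
      nlinarith [sq_nonneg ξ]
    · have hx : 0 ≤ (1 + ξ^2) ^ s := Real.rpow_nonneg (by positivity) s
      have : c⁻¹ ≤ 1 := by
        rw [inv_le_one_iff₀]; right; rw [hc2]; nlinarith [Real.one_le_rpow (by norm_num : (1:ℝ) ≤ 2) hs]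
      nlinarith
  have hB : ∀ ξ : ℝ, ξ ≠ 0 → omega1 s ξ ≤ c * (1 + ξ ^ 2) ^ s := by
    intro ξ hξ
    have hb : (1:ℝ) ≤ 1 + ξ^2 := by nlinarith [sq_nonneg ξ]
    have hone : (1:ℝ) ≤ (1 + ξ^2) ^ s := Real.one_le_rpow hb hs
    have hc1 : (1:ℝ) ≤ c := by
      rw [hc2]; nlinarith [Real.one_le_rpow (by norm_num : (1:ℝ) ≤ 2) hs]
    unfold omega1; split_ifs with h
    · have habs := abs_lt.mp h
      have hsq : ξ^2 ≤ 1 := by nlinarith [abs_nonneg ξ, sq_abs ξ]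
      have heq : (ξ ^ 2 + ξ ^ 4) / ξ ^ 2 = 1 + ξ ^ 2 := by field_simp
      rw [heq, hc2]
      nlinarith [Real.one_le_rpow (by norm_num : (1:ℝ) ≤ 2) hs]
    · nlinarith [Real.rpow_nonneg (show (0:ℝ) ≤ 1 + ξ^2 by positivity) s]
  constructor
  · rw [← lintegral_const_mul' _ _ (by simp : ENNReal.ofReal c⁻¹ ≠ ⊤)]
    refine lintegral_mono_ae ?_
    filter_upwards [h0] with ξ hξ
    rw [← mul_assoc, ← ENNReal.ofReal_mul (by positivity)]
    exact mul_le_mul_left (ENNReal.ofReal_le_ofReal (hA ξ hξ)) _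
  · rw [← lintegral_const_mul' _ _ (by simp : ENNReal.ofReal c ≠ ⊤)]
    refine lintegral_mono_ae ?_
    filter_upwards [h0] with ξ hξ
    rw [← mul_assoc, ← ENNReal.ofReal_mul hcpos.le]
    exact mul_le_mul_left (ENNReal.ofReal_le_ofReal (hB ξ hξ)) _

lemma part2 (s : ℝ) (hs : 0 ≤ s) (d : ℕ) (hd : 2 ≤ d) (h0 : 0 < d)
    (F : EuclideanSpace ℝ (Fin d) → ℂ) :
    (∫⁻ ξ, ENNReal.ofReal (omegaD d h0 s ξ) * (‖F ξ‖₊ : ℝ≥0∞) ^ 2) ^ (1/2 : ℝ)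
      ≤ 2 * (∫⁻ ξ, ENNReal.ofReal ((1 + ‖ξ‖ ^ 2) ^ s) * (‖F ξ‖₊ : ℝ≥0∞) ^ 2) ^ (1/2 : ℝ) := by
  have hpt : ∀ ξ : EuclideanSpace ℝ (Fin d), omegaD d h0 s ξ ≤ 4 * (1 + ‖ξ‖ ^ 2) ^ s := by
    intro ξ
    have hone : (1:ℝ) ≤ (1 + ‖ξ‖^2) ^ s :=
      Real.one_le_rpow (by nlinarith [sq_nonneg ‖ξ‖]) hs
    unfold omegaD; split_ifs with h
    · rcases eq_or_ne ‖ξ‖ 0 with hn0 | hn0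
      · rw [hn0]
        norm_num
      · have hpos : 0 < ‖ξ‖^2 := by positivity
        have hcoord := coord_sq_le ξ ⟨0, h0⟩
        rw [div_le_iff₀ hpos]
        have h1 : ‖ξ‖^2 ≤ 1 := by nlinarith [norm_nonneg ξ]
        nlinarith [sq_nonneg ‖ξ‖, hpos]
    · nlinarith [Real.rpow_nonneg (show (0:ℝ) ≤ 1 + ‖ξ‖^2 by positivity) s]
  have hint : (∫⁻ ξ, ENNReal.ofReal (omegaD d h0 s ξ) * (‖F ξ‖₊ : ℝ≥0∞) ^ 2)
      ≤ (4:ℝ≥0∞) * ∫⁻ ξ, ENNReal.ofReal ((1 + ‖ξ‖ ^ 2) ^ s) * (‖F ξ‖₊ : ℝ≥0∞) ^ 2 := by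
    rw [← lintegral_const_mul' _ _ (by simp : (4:ℝ≥0∞) ≠ ⊤)]
    refine lintegral_mono fun ξ => ?_
    rw [← mul_assoc]
    refine mul_le_mul_left ?_ _
    calc ENNReal.ofReal (omegaD d h0 s ξ) ≤ ENNReal.ofReal (4 * (1 + ‖ξ‖ ^ 2) ^ s) :=
          ENNReal.ofReal_le_ofReal (hpt ξ)
      _ = 4 * ENNReal.ofReal ((1 + ‖ξ‖ ^ 2) ^ s) := by
          rw [ENNReal.ofReal_mul (by norm_num)]; norm_num
  calc (∫⁻ ξ, ENNReal.ofReal (omegaD d h0 s ξ) * (‖F ξ‖₊ : ℝ≥0∞) ^ 2) ^ (1/2 : ℝ)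
      ≤ ((4:ℝ≥0∞) * ∫⁻ ξ, ENNReal.ofReal ((1 + ‖ξ‖ ^ 2) ^ s) * (‖F ξ‖₊ : ℝ≥0∞) ^ 2) ^ (1/2 : ℝ) :=
        ENNReal.rpow_le_rpow hint (by norm_num)
    _ = 2 * (∫⁻ ξ, ENNReal.ofReal ((1 + ‖ξ‖ ^ 2) ^ s) * (‖F ξ‖₊ : ℝ≥0∞) ^ 2) ^ (1/2 : ℝ) := by
        rw [ENNReal.mul_rpow_of_nonneg _ _ (by norm_num : (0:ℝ) ≤ 1/2)]
        congr 1
        rw [show (4:ℝ≥0∞) = 2 ^ (2:ℝ) by rw [ENNReal.rpow_two]; norm_num, ← ENNReal.rpow_mul]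
        norm_num

noncomputable def sig (m : ℕ) : ℝ := 1 / (2 * ((m : ℝ) + 2))

lemma sig_pos (m : ℕ) : 0 < sig m := by unfold sig; positivity

noncomputable def gam (m : ℕ) : ℝ := -((m : ℝ) + 3) / 2

lemma gam_nonpos (m : ℕ) : gam m ≤ 0 := by
  unfold gam
  have : (0:ℝ) ≤ (m:ℝ) + 3 := by positivity
  linarith

def JJ (m k : ℕ) (j : Fin (m+2)) : Set ℝ :=
  if (j : ℕ) = 0 then Set.Ioo (-(sig m * (1/2)^(2*k+2))) (sig m * (1/2)^(2*k+2))
  else if (j : ℕ) = 1 then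
    Set.Ioo (-(sig m * (1/2)^k)) (-(sig m * (1/2)^(k+1))) ∪
      Set.Ioo (sig m * (1/2)^(k+1)) (sig m * (1/2)^k)
  else Set.Ioo (-(sig m * (1/2)^(k+1))) (sig m * (1/2)^(k+1))

def BB (m k : ℕ) : Set (EuclideanSpace ℝ (Fin (m+2))) := {ξ | ∀ j, ξ j ∈ JJ m k j}

noncomputable def FF (m : ℕ) : EuclideanSpace ℝ (Fin (m+2)) → ℂ :=
  (⋃ k, BB m k).indicator (fun ξ => ((|ξ ⟨1, by omega⟩| ^ gam m : ℝ) : ℂ))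

noncomputable def Vr (m k : ℕ) : ℝ := 2 * sig m * (1/2)^(2*k+2) * (sig m * (1/2)^k)^(m+1)

lemma Vr_pos (m k : ℕ) : 0 < Vr m k := by
  unfold Vr; have := sig_pos m; positivity

lemma mem_Ioo_abs {c t : ℝ} : t ∈ Set.Ioo (-c) c ↔ |t| < c := by
  rw [Set.mem_Ioo, abs_lt]

lemma mem_ann_abs {a b t : ℝ} (ha : 0 < a) :
    t ∈ (Set.Ioo (-b) (-a) ∪ Set.Ioo a b) ↔ a < |t| ∧ |t| < b := by
  simp only [Set.mem_union, Set.mem_Ioo]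
  rcases le_or_gt 0 t with h | h
  · rw [abs_of_nonneg h]
    constructor
    · rintro (⟨h1, h2⟩ | ⟨h1, h2⟩)
      · exact absurd h2 (by linarith)
      · exact ⟨h1, h2⟩
    · rintro ⟨h1, h2⟩; exact Or.inr ⟨h1, h2⟩
  · rw [abs_of_neg h]
    constructor
    · rintro (⟨h1, h2⟩ | ⟨h1, h2⟩)
      · exact ⟨by linarith, by linarith⟩
      · exact absurd h1 (by linarith)
    · rintro ⟨h1, h2⟩; exact Or.inl ⟨by linarith, by linarith⟩

lemma BB_spec {m k : ℕ} {ξ : EuclideanSpace ℝ (Fin (m+2))} (hξ : ξ ∈ BB m k) :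
    |ξ ⟨0, by omega⟩| < sig m * (1/2)^(2*k+2) ∧
    (sig m * (1/2)^(k+1) < |ξ ⟨1, by omega⟩| ∧ |ξ ⟨1, by omega⟩| < sig m * (1/2)^k) ∧
    ∀ j : Fin (m+2), |ξ j| ≤ sig m * (1/2)^k := by
  have h0 : ξ ⟨0, by omega⟩ ∈
      Set.Ioo (-(sig m * (1/2)^(2*k+2))) (sig m * (1/2)^(2*k+2)) := hξ (⟨0, by omega⟩ : Fin (m+2))
  have h1 : ξ ⟨1, by omega⟩ ∈
      (Set.Ioo (-(sig m * (1/2)^k)) (-(sig m * (1/2)^(k+1))) ∪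
        Set.Ioo (sig m * (1/2)^(k+1)) (sig m * (1/2)^k)) := hξ (⟨1, by omega⟩ : Fin (m+2))
  rw [mem_Ioo_abs] at h0
  rw [mem_ann_abs (by have := sig_pos m; positivity)] at h1
  refine ⟨h0, h1, fun j => ?_⟩
  have hj := hξ j
  rw [JJ] at hj
  split_ifs at hj with hj0 hj1
  · rw [mem_Ioo_abs] at hj
    refine hj.le.trans ?_
    have h2 : ((1:ℝ)/2)^(2*k+2) ≤ (1/2)^k :=
      pow_le_pow_of_le_one (by norm_num) (by norm_num) (by omega)
    nlinarith [sig_pos m]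
  · rw [mem_ann_abs (by have := sig_pos m; positivity)] at hj
    exact hj.2.le
  · rw [mem_Ioo_abs] at hj
    refine hj.le.trans ?_
    have h2 : ((1:ℝ)/2)^(k+1) ≤ (1/2)^k :=
      pow_le_pow_of_le_one (by norm_num) (by norm_num) (by omega)
    nlinarith [sig_pos m]

lemma BB_norm_sq_le {m k : ℕ} {ξ : EuclideanSpace ℝ (Fin (m+2))} (hξ : ξ ∈ BB m k) :
    ‖ξ‖^2 ≤ ((m:ℝ)+2) * (sig m * (1/2)^k)^2 := by
  rw [euclid_norm_sq_eq]
  calc ∑ j, (ξ j)^2 ≤ ∑ _j : Fin (m+2), (sig m * (1/2)^k)^2 := by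
        refine Finset.sum_le_sum fun j _ => ?_
        have h := (BB_spec hξ).2.2 j
        calc (ξ j)^2 = |ξ j|^2 := (sq_abs _).symm
          _ ≤ (sig m * (1/2)^k)^2 := pow_le_pow_left₀ (abs_nonneg _) h 2
    _ = ((m:ℝ)+2) * (sig m * (1/2)^k)^2 := by
        rw [Finset.sum_const, Finset.card_univ, Fintype.card_fin]
        push_cast; ring

lemma sig_sq_bound (m : ℕ) : ((m:ℝ)+2) * (sig m)^2 ≤ 1/8 := by
  have hM : (2:ℝ) ≤ (m:ℝ)+2 := by
    have : (0:ℝ) ≤ (m:ℝ) := Nat.cast_nonneg m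
    linarith
  have hMpos : (0:ℝ) < (m:ℝ)+2 := by linarith
  have heq : ((m:ℝ)+2) * (sig m)^2 = 1/(4*((m:ℝ)+2)) := by
    unfold sig; field_simp; ring
  rw [heq]
  rw [div_le_div_iff₀ (by positivity) (by norm_num)]
  linarith

lemma BB_norm_lt_one {m k : ℕ} {ξ : EuclideanSpace ℝ (Fin (m+2))} (hξ : ξ ∈ BB m k) :
    ‖ξ‖ < 1 := by
  have h1 := BB_norm_sq_le hξ
  have h2 : ((1:ℝ)/2)^k ≤ 1 := pow_le_one₀ (by norm_num) (by norm_num)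
  have h3 : (0:ℝ) < (1/2)^k := by positivity
  have h4 := sig_sq_bound m
  have h5 : ‖ξ‖^2 ≤ 1/8 := by
    have : ((m:ℝ)+2) * (sig m * (1/2)^k)^2 ≤ ((m:ℝ)+2) * (sig m)^2 := by
      rw [mul_pow]
      refine mul_le_mul_of_nonneg_left ?_ (by positivity)
      have hx2 : ((1/2:ℝ)^k)^2 ≤ 1 := by nlinarith
      calc sig m ^2 * ((1/2:ℝ)^k)^2 ≤ sig m ^2 * 1 :=
            mul_le_mul_of_nonneg_left hx2 (sq_nonneg _)
        _ = sig m ^2 := mul_one _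
    linarith
  nlinarith [norm_nonneg ξ]

lemma BB_norm_sq_lower {m k : ℕ} {ξ : EuclideanSpace ℝ (Fin (m+2))} (hξ : ξ ∈ BB m k) :
    (sig m * (1/2)^(k+1))^2 < ‖ξ‖^2 := by
  have h1 := (BB_spec hξ).2.1.1
  have ha : (0:ℝ) < sig m * (1/2)^(k+1) := by have := sig_pos m; positivity
  calc (sig m * (1/2)^(k+1))^2 < |ξ ⟨1, by omega⟩|^2 :=
        pow_lt_pow_left₀ h1 ha.le (by norm_num)
    _ = (ξ ⟨1, by omega⟩)^2 := sq_abs _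
    _ ≤ ‖ξ‖^2 := coord_sq_le ξ _

lemma BB_omega_le {m k : ℕ} (s : ℝ) (h0 : 0 < m + 2) {ξ : EuclideanSpace ℝ (Fin (m+2))}
    (hξ : ξ ∈ BB m k) : omegaD (m+2) h0 s ξ ≤ (1/4:ℝ)^k := by
  rw [omegaD, if_pos (BB_norm_lt_one hξ)]
  have hσ := sig_pos m
  have hlow := BB_norm_sq_lower hξ
  have hNpos : (0:ℝ) < ‖ξ‖^2 := lt_of_le_of_lt (by positivity) hlow
  have hi0 := (BB_spec hξ).1
  rw [div_le_iff₀ hNpos]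
  -- e1 : (ξ 0)^2 ≤ (1/2)^(2k+2) * ‖ξ‖^2
  have e1 : (ξ ⟨0, h0⟩)^2 ≤ (1/2:ℝ)^(2*k+2) * ‖ξ‖^2 := by
    have h1 : (ξ ⟨0, h0⟩)^2 ≤ (sig m * (1/2)^(2*k+2))^2 := by
      rw [← sq_abs]
      exact pow_le_pow_left₀ (abs_nonneg _) hi0.le 2
    have h2 : (sig m * (1/2:ℝ)^(2*k+2))^2 = (1/2)^(2*k+2) * (sig m * (1/2)^(k+1))^2 := by
      rw [mul_pow, mul_pow, ← pow_mul, ← pow_mul,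
        show (2*k+2)*2 = (2*k+2)+((k+1)*2) by ring, pow_add]
      ring
    calc (ξ ⟨0, h0⟩)^2 ≤ (1/2:ℝ)^(2*k+2) * (sig m * (1/2)^(k+1))^2 := h1.trans_eq h2
      _ ≤ (1/2:ℝ)^(2*k+2) * ‖ξ‖^2 := mul_le_mul_of_nonneg_left hlow.le (by positivity)
  -- e2 : ‖ξ‖^4 ≤ (1/8) * (1/2)^(2*k) * ‖ξ‖^2
  have e2 : ‖ξ‖^4 ≤ (1/8:ℝ) * (1/2)^(2*k) * ‖ξ‖^2 := by
    have h3 := BB_norm_sq_le hξ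
    have h4 : ((m:ℝ)+2) * (sig m * (1/2)^k)^2 ≤ (1/8) * (1/2)^(2*k) := by
      have h5 : ((m:ℝ)+2) * (sig m * (1/2)^k)^2 = (((m:ℝ)+2) * (sig m)^2) * (1/2)^(2*k) := by
        rw [mul_pow, ← pow_mul]
        ring_nf
      rw [h5]
      exact mul_le_mul_of_nonneg_right (sig_sq_bound m) (by positivity)
    calc ‖ξ‖^4 = ‖ξ‖^2 * ‖ξ‖^2 := by ring
      _ ≤ ((1/8:ℝ) * (1/2)^(2*k)) * ‖ξ‖^2 := by
          refine mul_le_mul_of_nonneg_right (h3.trans h4) (by positivity)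
  have h14 : (1/4:ℝ)^k = (1/2)^(2*k) := by
    rw [show (1/4:ℝ) = (1/2)^2 by norm_num, ← pow_mul]
  have h15 : (1/2:ℝ)^(2*k+2) = (1/4) * (1/2)^(2*k) := by
    rw [pow_add]; ring
  rw [h14]
  have hq : (0:ℝ) ≤ (1/2:ℝ)^(2*k) * ‖ξ‖^2 := by positivity
  nlinarith [e1, e2]

lemma rpow_gam_sq {m : ℕ} {x : ℝ} (hx : 0 < x) : (x ^ gam m)^2 = (x^(m+3))⁻¹ := by
  have h1 : (x ^ gam m)^(2:ℕ) = x ^ (gam m * 2) := by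
    rw [← Real.rpow_natCast (x ^ gam m) 2, ← Real.rpow_mul hx.le]
    norm_num
  rw [h1, show gam m * 2 = -(((m:ℕ):ℝ)+3) by unfold gam; push_cast; ring,
    Real.rpow_neg hx.le, show (((m:ℕ):ℝ)+3) = ((m+3 : ℕ):ℝ) by push_cast; ring,
    Real.rpow_natCast]

lemma rpow_gam_eq_sqrt {m : ℕ} {x : ℝ} (hx : 0 < x) :
    x ^ gam m = Real.sqrt ((x^(m+3))⁻¹) := by
  have h1 : ((x^(m+3:ℕ)):ℝ)⁻¹ = x ^ (-(((m:ℝ))+3)) := by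
    rw [show (-(((m:ℝ))+3)) = -(((m+3:ℕ)):ℝ) by push_cast; ring, Real.rpow_neg hx.le,
      Real.rpow_natCast]
  rw [h1, Real.sqrt_eq_rpow, ← Real.rpow_mul hx.le]
  congr 1
  unfold gam
  ring

lemma JJ_measurable (m k : ℕ) (j : Fin (m+2)) : MeasurableSet (JJ m k j) := by
  unfold JJ
  split_ifs
  · exact measurableSet_Ioo
  · exact measurableSet_Ioo.union measurableSet_Ioo
  · exact measurableSet_Ioo

lemma BB_preimage (m k : ℕ) : BB m k =
    (MeasurableEquiv.toLp 2 (Fin (m+2) → ℝ)).symm ⁻¹' (Set.univ.pi (JJ m k)) := by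
  ext ξ
  simp only [BB, Set.mem_setOf_eq, Set.mem_preimage, Set.mem_univ_pi]
  rfl

lemma BB_measurable (m k : ℕ) : MeasurableSet (BB m k) := by
  rw [BB_preimage]
  exact (MeasurableEquiv.toLp 2 (Fin (m+2) → ℝ)).symm.measurable
    (MeasurableSet.univ_pi (JJ_measurable m k))

lemma vol_JJ (m k : ℕ) (j : Fin (m+2)) : volume (JJ m k j) =
    ENNReal.ofReal (if (j : ℕ) = 0 then 2 * sig m * (1/2)^(2*k+2) else sig m * (1/2)^k) := by
  have hσ := sig_pos m
  unfold JJ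
  split_ifs with h1 h2
  · rw [Real.volume_Ioo]
    congr 1; ring
  · have hd : Disjoint (Set.Ioo (-(sig m * (1/2:ℝ)^k)) (-(sig m * (1/2)^(k+1))))
        (Set.Ioo (sig m * (1/2:ℝ)^(k+1)) (sig m * (1/2)^k)) := by
      rw [Set.disjoint_left]
      rintro t ⟨_, h2⟩ ⟨h3, _⟩
      have : (0:ℝ) < sig m * (1/2)^(k+1) := by positivity
      linarith
    have hmono : sig m * (1/2:ℝ)^(k+1) ≤ sig m * (1/2)^k := by
      have := pow_le_pow_of_le_one (by norm_num : (0:ℝ) ≤ 1/2)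
        (by norm_num : (1/2:ℝ) ≤ 1) (by omega : k ≤ k+1)
      nlinarith [sig_pos m]
    rw [measure_union hd measurableSet_Ioo, Real.volume_Ioo, Real.volume_Ioo,
      ← ENNReal.ofReal_add (by linarith) (by linarith)]
    congr 1
    rw [pow_succ]
    ring
  · rw [Real.volume_Ioo]
    congr 1
    rw [pow_succ]
    ring

lemma vol_BB (m k : ℕ) : volume (BB m k) = ENNReal.ofReal (Vr m k) := by
  have hσ := sig_pos m
  rw [BB_preimage,
    (EuclideanSpace.volume_preserving_symm_measurableEquiv_toLp (Fin (m+2))).measure_preimage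
      (MeasurableSet.univ_pi (JJ_measurable m k)).nullMeasurableSet,
    volume_pi, Measure.pi_pi]
  rw [Finset.prod_congr rfl (fun j _ => vol_JJ m k j)]
  have hne : (⟨0, by omega⟩ : Fin (m+2)) ∈ Finset.univ := Finset.mem_univ _
  rw [← Finset.mul_prod_erase _ _ hne]
  have hstep : ∀ j ∈ Finset.univ.erase (⟨0, by omega⟩ : Fin (m+2)),
      ENNReal.ofReal (if (j : ℕ) = 0 then 2 * sig m * (1/2)^(2*k+2) else sig m * (1/2)^k)
        = ENNReal.ofReal (sig m * (1/2)^k) := by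
    intro j hj
    rw [if_neg]
    intro hval
    exact (Finset.mem_erase.mp hj).1 (Fin.ext hval)
  rw [Finset.prod_congr rfl hstep, Finset.prod_const, if_pos rfl,
    Finset.card_erase_of_mem hne, Finset.card_univ, Fintype.card_fin]
  rw [← ENNReal.ofReal_pow (by positivity), ← ENNReal.ofReal_mul (by positivity)]
  rfl

lemma BB_disjoint (m : ℕ) : Pairwise (Function.onFun Disjoint (BB m)) := by
  have key : ∀ p q : ℕ, p < q → Disjoint (BB m p) (BB m q) := by
    intro p q hpq
    rw [Set.disjoint_left]
    intro ξ hp hq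
    have h1 := (BB_spec hp).2.1.1
    have h2 := (BB_spec hq).2.1.2
    have h3 : sig m * (1/2:ℝ)^q ≤ sig m * (1/2)^(p+1) := by
      have := pow_le_pow_of_le_one (by norm_num : (0:ℝ) ≤ 1/2)
        (by norm_num : (1/2:ℝ) ≤ 1) (by omega : p+1 ≤ q)
      nlinarith [sig_pos m]
    linarith
  intro p q hpq
  rcases lt_or_gt_of_ne hpq with h | h
  · exact key p q h
  · exact (key q p h).symm

lemma key_id (m k : ℕ) : ((sig m * (1/2:ℝ)^k)^(m+3))⁻¹ * Vr m k = (m:ℝ)+2 := by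
  have hM : (0:ℝ) < (m:ℝ)+2 := by positivity
  have hx : (0:ℝ) < (1/2:ℝ)^k := by positivity
  have hσ : sig m = 1/(2*((m:ℝ)+2)) := rfl
  unfold Vr
  rw [hσ]
  set x := (1/2:ℝ)^k with hxdef
  have h2k : (1/2:ℝ)^(2*k+2) = x^2 * (1/4) := by
    rw [show 2*k+2 = k*2+2 by ring, pow_add, pow_mul]
    norm_num [hxdef]
  rw [h2k]
  have h1 : (1/(2*((m:ℝ)+2)) * x)^(m+3) = (1/(2*((m:ℝ)+2))*x)^(m+1) * (1/(2*((m:ℝ)+2))*x)^2 := by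
    rw [← pow_add]
  have hne : (1/(2*((m:ℝ)+2))*x)^(m+1) ≠ 0 := by positivity
  rw [h1, mul_inv]
  field_simp
  ring

lemma key_id2 (m k : ℕ) :
    ((sig m * (1/2:ℝ)^(k+1))^(m+3))⁻¹ * Vr m k = ((m:ℝ)+2) * 2^(m+3) := by
  have h : sig m * (1/2:ℝ)^(k+1) = (sig m * (1/2)^k) * (1/2) := by
    rw [pow_succ]; ring
  have h2 : ((1/2:ℝ)^(m+3))⁻¹ = 2^(m+3) := by
    rw [one_div, inv_pow, inv_inv]
  calc ((sig m * (1/2:ℝ)^(k+1))^(m+3))⁻¹ * Vr m k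
      = (((sig m * (1/2:ℝ)^k)^(m+3))⁻¹ * Vr m k) * ((1/2:ℝ)^(m+3))⁻¹ := by
        rw [h, mul_pow, mul_inv]; ring
    _ = ((m:ℝ)+2) * 2^(m+3) := by rw [key_id, h2]

lemma BB_neg {m k : ℕ} {ξ : EuclideanSpace ℝ (Fin (m+2))} : -ξ ∈ BB m k ↔ ξ ∈ BB m k := by
  have key : ∀ ζ : EuclideanSpace ℝ (Fin (m+2)), ζ ∈ BB m k → -ζ ∈ BB m k := by
    intro ζ hζ j
    have hj := hζ j
    have hneg : (-ζ) j = -(ζ j) := rfl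
    rw [hneg]
    have hapos : (0:ℝ) < sig m * (1/2)^(k+1) := by have := sig_pos m; positivity
    unfold JJ at hj ⊢
    split_ifs at hj ⊢ with h1 h2
    · rw [mem_Ioo_abs] at hj ⊢; rwa [abs_neg]
    · rw [mem_ann_abs hapos] at hj ⊢; rwa [abs_neg]
    · rw [mem_Ioo_abs] at hj ⊢; rwa [abs_neg]
  constructor
  · intro h
    have := key _ h
    rwa [neg_neg] at this
  · exact key ξ

lemma sqrt_bound (m k : ℕ) :
    Real.sqrt (((sig m * (1/2:ℝ)^(k+1))^(m+3))⁻¹) * Vr m k ≤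
      Real.sqrt ((((m:ℝ)+2) * 2^(m+3)) * (2 * sig m * (sig m)^(m+1))) * (1/2)^k := by
  have hσ := sig_pos m
  have hV := Vr_pos m k
  have hC : (0:ℝ) ≤ ((m:ℝ)+2) * 2^(m+3) := by positivity
  have h1 : Real.sqrt (((sig m * (1/2:ℝ)^(k+1))^(m+3))⁻¹) * Vr m k
      = Real.sqrt ((((sig m * (1/2:ℝ)^(k+1))^(m+3))⁻¹) * (Vr m k)^2) := by
    rw [Real.sqrt_mul (by positivity), Real.sqrt_sq hV.le]
  have h2 : (((sig m * (1/2:ℝ)^(k+1))^(m+3))⁻¹) * (Vr m k)^2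
      = (((m:ℝ)+2) * 2^(m+3)) * Vr m k := by
    rw [sq, ← mul_assoc, key_id2]
  have h3 : Vr m k ≤ 2 * sig m * (sig m)^(m+1) * (1/4)^k := by
    have e1 : (1/2:ℝ)^(2*k+2) ≤ (1/4:ℝ)^k := by
      rw [show (1/4:ℝ) = (1/2)^2 by norm_num, ← pow_mul]
      exact pow_le_pow_of_le_one (by norm_num) (by norm_num) (by omega)
    have e2 : (sig m * (1/2:ℝ)^k)^(m+1) ≤ (sig m)^(m+1) := by
      rw [mul_pow]
      have : ((1/2:ℝ)^k)^(m+1) ≤ 1 := pow_le_one₀ (by positivity)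
        (pow_le_one₀ (by norm_num) (by norm_num))
      nlinarith [pow_nonneg hσ.le (m+1), pow_nonneg (show (0:ℝ) ≤ (1/2:ℝ)^k by positivity) (m+1)]
    calc Vr m k = 2 * sig m * (1/2:ℝ)^(2*k+2) * (sig m * (1/2)^k)^(m+1) := rfl
      _ ≤ 2 * sig m * (1/4:ℝ)^k * (sig m)^(m+1) := by
          have := mul_le_mul (mul_le_mul_of_nonneg_left e1 (by positivity)) e2
            (by positivity) (by positivity)
          linarith [this]
      _ = 2 * sig m * (sig m)^(m+1) * (1/4)^k := by ring
  rw [h1, h2]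
  calc Real.sqrt ((((m:ℝ)+2) * 2^(m+3)) * Vr m k)
      ≤ Real.sqrt ((((m:ℝ)+2) * 2^(m+3)) * (2 * sig m * (sig m)^(m+1) * (1/4)^k)) :=
        Real.sqrt_le_sqrt (mul_le_mul_of_nonneg_left h3 hC)
    _ = Real.sqrt ((((m:ℝ)+2) * 2^(m+3)) * (2 * sig m * (sig m)^(m+1))) * (1/2)^k := by
        rw [show (((m:ℝ)+2) * 2^(m+3)) * (2 * sig m * (sig m)^(m+1) * (1/4)^k)
            = ((((m:ℝ)+2) * 2^(m+3)) * (2 * sig m * (sig m)^(m+1))) * ((1/2)^k)^2 by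
          rw [show (1/4:ℝ) = (1/2)^2 by norm_num, ← pow_mul, show 2*k = k*2 by ring, pow_mul]
          ring]
        rw [Real.sqrt_mul (by positivity), Real.sqrt_sq (by positivity)]

lemma geom_sum_lt_top {r : ℝ} (hr0 : 0 ≤ r) (hr1 : r < 1) (C : ℝ) :
    (∑' k : ℕ, ENNReal.ofReal (C * r^k)) < ⊤ := by
  have h1 : ∀ k : ℕ, ENNReal.ofReal (C * r^k) ≤ ENNReal.ofReal C * (ENNReal.ofReal r)^k := by
    intro k
    rw [← ENNReal.ofReal_pow hr0, ← ENNReal.ofReal_mul']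
    exact pow_nonneg hr0 k
  calc (∑' k : ℕ, ENNReal.ofReal (C * r^k))
      ≤ ∑' k : ℕ, ENNReal.ofReal C * (ENNReal.ofReal r)^k :=
        Summable.tsum_le_tsum h1 ENNReal.summable ENNReal.summable
    _ = ENNReal.ofReal C * ∑' k : ℕ, (ENNReal.ofReal r)^k := ENNReal.tsum_mul_left
    _ = ENNReal.ofReal C * (1 - ENNReal.ofReal r)⁻¹ := by rw [ENNReal.tsum_geometric]
    _ < ⊤ := by
        refine ENNReal.mul_lt_top ENNReal.ofReal_lt_top ?_
        rw [ENNReal.inv_lt_top]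
        exact tsub_pos_of_lt (by rwa [ENNReal.ofReal_lt_one])

lemma part3 (s : ℝ) (hs : 0 ≤ s) (m : ℕ) (h0 : 0 < m+2) :
    ∃ F : EuclideanSpace ℝ (Fin (m+2)) → ℂ,
      (∀ ξ, (starRingEnd ℂ) (F ξ) = F (-ξ)) ∧ LocallyIntegrable F volume ∧
      (∫⁻ ξ, ENNReal.ofReal (omegaD (m+2) h0 s ξ) * (‖F ξ‖₊ : ℝ≥0∞) ^ 2) < ⊤ ∧
      (∫⁻ ξ, ENNReal.ofReal ((1 + ‖ξ‖ ^ 2) ^ s) * (‖F ξ‖₊ : ℝ≥0∞) ^ 2) = ⊤ := by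
  classical
  set i1 : Fin (m+2) := ⟨1, by omega⟩ with hi1
  set U : Set (EuclideanSpace ℝ (Fin (m+2))) := ⋃ k, BB m k with hUdef
  have hUm : MeasurableSet U := MeasurableSet.iUnion (BB_measurable m)
  have hσ := sig_pos m
  have hFF_on : ∀ (k : ℕ) ξ, ξ ∈ BB m k → FF m ξ = ((|ξ i1| ^ gam m : ℝ) : ℂ) :=
    fun k ξ hξ => Set.indicator_of_mem (Set.mem_iUnion.mpr ⟨k, hξ⟩) _
  have hFF_off : ∀ ξ, ξ ∉ U → FF m ξ = 0 := fun ξ h => Set.indicator_of_notMem h _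
  have habs_pos : ∀ (k : ℕ) ξ, ξ ∈ BB m k → 0 < |ξ i1| := by
    intro k ξ hξ
    have h1 := (BB_spec hξ).2.1.1
    have : (0:ℝ) < sig m * (1/2)^(k+1) := by positivity
    linarith
  have hnn : ∀ (k : ℕ) ξ, ξ ∈ BB m k →
      (‖FF m ξ‖₊ : ℝ≥0∞)^2 = ENNReal.ofReal ((|ξ i1| ^ gam m)^2) := by
    intro k ξ hξ
    rw [hFF_on k ξ hξ, ← enorm_eq_nnnorm, ← ofReal_norm, ← ENNReal.ofReal_pow (norm_nonneg _)]
    congr 1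
    rw [Complex.norm_real, Real.norm_eq_abs,
      abs_of_nonneg (Real.rpow_nonneg (abs_nonneg _) _)]
  have hsql : ∀ (k : ℕ) ξ, ξ ∈ BB m k →
      (((sig m * (1/2:ℝ)^k)^(m+3))⁻¹) ≤ (|ξ i1| ^ gam m)^2 := by
    intro k ξ hξ
    have htpos := habs_pos k ξ hξ
    have htu := (BB_spec hξ).2.1.2
    rw [rpow_gam_sq htpos]
    gcongr
  have hsqu : ∀ (k : ℕ) ξ, ξ ∈ BB m k →
      (|ξ i1| ^ gam m)^2 ≤ (((sig m * (1/2:ℝ)^(k+1))^(m+3))⁻¹) := by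
    intro k ξ hξ
    have htpos := habs_pos k ξ hξ
    have hta := (BB_spec hξ).2.1.1
    rw [rpow_gam_sq htpos]
    gcongr
  have habsu : ∀ (k : ℕ) ξ, ξ ∈ BB m k →
      |ξ i1| ^ gam m ≤ Real.sqrt ((((sig m * (1/2:ℝ)^(k+1))^(m+3))⁻¹)) := by
    intro k ξ hξ
    have htpos := habs_pos k ξ hξ
    have hta := (BB_spec hξ).2.1.1
    rw [rpow_gam_eq_sqrt htpos]
    refine Real.sqrt_le_sqrt ?_
    gcongr
  have hsplit : ∀ f : EuclideanSpace ℝ (Fin (m+2)) → ℝ≥0∞, (∀ ξ ∉ U, f ξ = 0) →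
      (∫⁻ ξ, f ξ) = ∑' k, ∫⁻ ξ in BB m k, f ξ := by
    intro f hf
    rw [← lintegral_iUnion (BB_measurable m) (BB_disjoint m), ← hUdef,
      ← lintegral_indicator hUm]
    refine lintegral_congr fun ξ => ?_
    by_cases h : ξ ∈ U
    · rw [Set.indicator_of_mem h]
    · rw [Set.indicator_of_notMem h, hf ξ h]
  refine ⟨FF m, ?_, ?_, ?_, ?_⟩
  · -- conjugation symmetry
    intro ξ
    by_cases h : ξ ∈ U
    · obtain ⟨k, hk⟩ := Set.mem_iUnion.mp h
      have hk' : -ξ ∈ BB m k := BB_neg.mpr hk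
      rw [hFF_on k ξ hk, hFF_on k (-ξ) hk', Complex.conj_ofReal]
      have : |(-ξ) i1| = |ξ i1| := by
        have : (-ξ) i1 = -(ξ i1) := rfl
        rw [this, abs_neg]
      rw [this]
    · have h' : -ξ ∉ U := by
        intro hc
        obtain ⟨k, hk⟩ := Set.mem_iUnion.mp hc
        exact h (Set.mem_iUnion.mpr ⟨k, BB_neg.mp hk⟩)
      rw [hFF_off ξ h, hFF_off (-ξ) h', map_zero]
  · -- locally integrable
    have hmF : Measurable (FF m) := by
      unfold FF
      refine Measurable.indicator ?_ hUm
      refine Complex.measurable_ofReal.comp ?_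
      refine Measurable.pow_const ?_ _
      exact ((measurable_pi_apply _).comp
        (MeasurableEquiv.toLp 2 (Fin (m+2) → ℝ)).symm.measurable).abs
    refine Integrable.locallyIntegrable ⟨hmF.aestronglyMeasurable, ?_⟩
    rw [hasFiniteIntegral_iff_norm]
    have hzero : ∀ ξ ∉ U, ENNReal.ofReal ‖FF m ξ‖ = 0 := by
      intro ξ h; rw [hFF_off ξ h]; simp
    rw [hsplit _ hzero]
    have hperk : ∀ k : ℕ, (∫⁻ ξ in BB m k, ENNReal.ofReal ‖FF m ξ‖) ≤
        ENNReal.ofReal ((Real.sqrt ((((m:ℝ)+2) * 2^(m+3)) * (2 * sig m * (sig m)^(m+1)))) *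
          (1/2)^k) := by
      intro k
      calc (∫⁻ ξ in BB m k, ENNReal.ofReal ‖FF m ξ‖)
          ≤ ∫⁻ _ in BB m k,
              ENNReal.ofReal (Real.sqrt ((((sig m * (1/2:ℝ)^(k+1))^(m+3))⁻¹))) := by
            refine setLIntegral_mono' (BB_measurable m k) fun ξ hξ => ?_
            refine ENNReal.ofReal_le_ofReal ?_
            rw [hFF_on k ξ hξ, Complex.norm_real, Real.norm_eq_abs,
              abs_of_nonneg (Real.rpow_nonneg (abs_nonneg _) _)]
            exact habsu k ξ hξ
        _ = ENNReal.ofReal (Real.sqrt ((((sig m * (1/2:ℝ)^(k+1))^(m+3))⁻¹))) *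
              volume (BB m k) := setLIntegral_const _ _
        _ = ENNReal.ofReal ((Real.sqrt ((((sig m * (1/2:ℝ)^(k+1))^(m+3))⁻¹))) * Vr m k) := by
            rw [vol_BB, ← ENNReal.ofReal_mul (Real.sqrt_nonneg _)]
        _ ≤ _ := ENNReal.ofReal_le_ofReal (sqrt_bound m k)
    calc (∑' k, ∫⁻ ξ in BB m k, ENNReal.ofReal ‖FF m ξ‖)
        ≤ ∑' k : ℕ, ENNReal.ofReal
            ((Real.sqrt ((((m:ℝ)+2) * 2^(m+3)) * (2 * sig m * (sig m)^(m+1)))) * (1/2)^k) :=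
          Summable.tsum_le_tsum hperk ENNReal.summable ENNReal.summable
      _ < ⊤ := geom_sum_lt_top (by norm_num) (by norm_num) _
  · -- X^s norm finite
    have hzero : ∀ ξ ∉ U,
        ENNReal.ofReal (omegaD (m+2) h0 s ξ) * (‖FF m ξ‖₊ : ℝ≥0∞) ^ 2 = 0 := by
      intro ξ h; rw [hFF_off ξ h]; simp
    rw [hsplit _ hzero]
    have hperk : ∀ k : ℕ,
        (∫⁻ ξ in BB m k, ENNReal.ofReal (omegaD (m+2) h0 s ξ) * (‖FF m ξ‖₊ : ℝ≥0∞) ^ 2) ≤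
          ENNReal.ofReal ((((m:ℝ)+2) * 2^(m+3)) * (1/4)^k) := by
      intro k
      calc (∫⁻ ξ in BB m k, ENNReal.ofReal (omegaD (m+2) h0 s ξ) * (‖FF m ξ‖₊ : ℝ≥0∞) ^ 2)
          ≤ ∫⁻ _ in BB m k, ENNReal.ofReal ((1/4:ℝ)^k) *
              ENNReal.ofReal ((((sig m * (1/2:ℝ)^(k+1))^(m+3))⁻¹)) := by
            refine setLIntegral_mono' (BB_measurable m k) fun ξ hξ => ?_
            rw [hnn k ξ hξ]
            exact mul_le_mul' (ENNReal.ofReal_le_ofReal (BB_omega_le s h0 hξ))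
              (ENNReal.ofReal_le_ofReal (hsqu k ξ hξ))
        _ = (ENNReal.ofReal ((1/4:ℝ)^k) *
              ENNReal.ofReal ((((sig m * (1/2:ℝ)^(k+1))^(m+3))⁻¹))) * volume (BB m k) :=
            setLIntegral_const _ _
        _ = ENNReal.ofReal ((1/4:ℝ)^k *
              (((sig m * (1/2:ℝ)^(k+1))^(m+3))⁻¹ * Vr m k)) := by
            rw [vol_BB, ← ENNReal.ofReal_mul (by positivity), ← ENNReal.ofReal_mul (by positivity),
              mul_assoc]
        _ = ENNReal.ofReal ((((m:ℝ)+2) * 2^(m+3)) * (1/4)^k) := by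
            rw [key_id2, mul_comm]
    calc (∑' k, ∫⁻ ξ in BB m k, ENNReal.ofReal (omegaD (m+2) h0 s ξ) * (‖FF m ξ‖₊ : ℝ≥0∞) ^ 2)
        ≤ ∑' k : ℕ, ENNReal.ofReal ((((m:ℝ)+2) * 2^(m+3)) * (1/4)^k) :=
          Summable.tsum_le_tsum hperk ENNReal.summable ENNReal.summable
      _ < ⊤ := geom_sum_lt_top (by norm_num) (by norm_num) _
  · -- H^s norm infinite
    rw [eq_top_iff]
    have hperk : ∀ k : ℕ, ENNReal.ofReal ((m:ℝ)+2) ≤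
        ∫⁻ ξ in BB m k, ENNReal.ofReal ((1 + ‖ξ‖ ^ 2) ^ s) * (‖FF m ξ‖₊ : ℝ≥0∞) ^ 2 := by
      intro k
      calc ENNReal.ofReal ((m:ℝ)+2)
          = ENNReal.ofReal ((((sig m * (1/2:ℝ)^k)^(m+3))⁻¹) * Vr m k) := by rw [key_id]
        _ = ENNReal.ofReal ((((sig m * (1/2:ℝ)^k)^(m+3))⁻¹)) * volume (BB m k) := by
            rw [ENNReal.ofReal_mul (by positivity), vol_BB]
        _ = ∫⁻ _ in BB m k, ENNReal.ofReal ((((sig m * (1/2:ℝ)^k)^(m+3))⁻¹)) :=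
            (setLIntegral_const _ _).symm
        _ ≤ ∫⁻ ξ in BB m k, ENNReal.ofReal ((1 + ‖ξ‖ ^ 2) ^ s) * (‖FF m ξ‖₊ : ℝ≥0∞) ^ 2 := by
            refine setLIntegral_mono' (BB_measurable m k) fun ξ hξ => ?_
            have h1 : (1:ℝ≥0∞) ≤ ENNReal.ofReal ((1 + ‖ξ‖ ^ 2) ^ s) := by
              rw [ENNReal.one_le_ofReal]
              exact Real.one_le_rpow (by nlinarith [sq_nonneg ‖ξ‖]) hs
            calc ENNReal.ofReal ((((sig m * (1/2:ℝ)^k)^(m+3))⁻¹))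
                = 1 * ENNReal.ofReal ((((sig m * (1/2:ℝ)^k)^(m+3))⁻¹)) := (one_mul _).symm
              _ ≤ ENNReal.ofReal ((1 + ‖ξ‖ ^ 2) ^ s) * (‖FF m ξ‖₊ : ℝ≥0∞) ^ 2 := by
                  refine mul_le_mul' h1 ?_
                  rw [hnn k ξ hξ]
                  exact ENNReal.ofReal_le_ofReal (hsql k ξ hξ)
    have hzero : ∀ ξ ∉ U,
        ENNReal.ofReal ((1 + ‖ξ‖ ^ 2) ^ s) * (‖FF m ξ‖₊ : ℝ≥0∞) ^ 2 = 0 := by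
      intro ξ h; rw [hFF_off ξ h]; simp
    calc (⊤ : ℝ≥0∞) = ∑' _ : ℕ, ENNReal.ofReal ((m:ℝ)+2) :=
          (ENNReal.tsum_const_eq_top_of_ne_zero
            (ENNReal.ofReal_pos.mpr (by positivity)).ne').symm
      _ ≤ ∑' k, ∫⁻ ξ in BB m k, ENNReal.ofReal ((1 + ‖ξ‖ ^ 2) ^ s) * (‖FF m ξ‖₊ : ℝ≥0∞) ^ 2 :=
          Summable.tsum_le_tsum hperk ENNReal.summable ENNReal.summable
      _ = ∫⁻ ξ, ENNReal.ofReal ((1 + ‖ξ‖ ^ 2) ^ s) * (‖FF m ξ‖₊ : ℝ≥0∞) ^ 2 :=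
          (hsplit _ hzero).symm

/-- (The spaces `X^s`, represented on the Fourier side: an element of
`X^s(ℝ^d)` is a real tempered distribution `f` whose Fourier transform `F = f̂` is locally
integrable with `‖f‖²_{X^s} = ∫ ω_s |F|² < ∞`; reality means `conj F(ξ) = F(−ξ)`, and
`‖f‖²_{H^s} = ∫ (1+|ξ|²)^s |F|²`.)
(1) For `d = 1`, `X^s(ℝ) = H^s(ℝ)` with equivalent norms.
(2) For `d ≥ 2`, `H^s(ℝ^d) ⊆ X^s(ℝ^d)` with `‖f‖_{X^s} ≤ 2 ‖f‖_{H^s}`.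
(3) For `d ≥ 2`, the inclusion is strict: there is `f ∈ X^s(ℝ^d) \ H^s(ℝ^d)`. -/
theorem stmt_9 (s : ℝ) (hs : 0 ≤ s) :
    (∃ c : ℝ, 0 < c ∧ ∀ F : ℝ → ℂ,
        ENNReal.ofReal c⁻¹ *
            (∫⁻ ξ, ENNReal.ofReal ((1 + ξ ^ 2) ^ s) * (‖F ξ‖₊ : ℝ≥0∞) ^ 2)
          ≤ (∫⁻ ξ, ENNReal.ofReal (omega1 s ξ) * (‖F ξ‖₊ : ℝ≥0∞) ^ 2) ∧
        (∫⁻ ξ, ENNReal.ofReal (omega1 s ξ) * (‖F ξ‖₊ : ℝ≥0∞) ^ 2)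
          ≤ ENNReal.ofReal c *
              ∫⁻ ξ, ENNReal.ofReal ((1 + ξ ^ 2) ^ s) * (‖F ξ‖₊ : ℝ≥0∞) ^ 2) ∧
    (∀ d : ℕ, ∀ hd : 2 ≤ d, ∀ F : EuclideanSpace ℝ (Fin d) → ℂ,
        (∫⁻ ξ, ENNReal.ofReal (omegaD d (by omega) s ξ) * (‖F ξ‖₊ : ℝ≥0∞) ^ 2) ^ (1/2 : ℝ)
          ≤ 2 * (∫⁻ ξ, ENNReal.ofReal ((1 + ‖ξ‖ ^ 2) ^ s) * (‖F ξ‖₊ : ℝ≥0∞) ^ 2) ^ (1/2 : ℝ)) ∧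
    (∀ d : ℕ, ∀ hd : 2 ≤ d, ∃ F : EuclideanSpace ℝ (Fin d) → ℂ,
        (∀ ξ, conj (F ξ) = F (-ξ)) ∧
        LocallyIntegrable F volume ∧
        (∫⁻ ξ, ENNReal.ofReal (omegaD d (by omega) s ξ) * (‖F ξ‖₊ : ℝ≥0∞) ^ 2) < ⊤ ∧
        (∫⁻ ξ, ENNReal.ofReal ((1 + ‖ξ‖ ^ 2) ^ s) * (‖F ξ‖₊ : ℝ≥0∞) ^ 2) = ⊤) := by
  refine ⟨part1 s hs, fun d hd F => part2 s hs d hd (by omega) F, fun d hd => ?_⟩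
  obtain ⟨m, rfl⟩ : ∃ m, d = m + 2 := ⟨d - 2, by omega⟩
  exact part3 s hs m (by omega)
end

section
/- Let s ≥ 0, d ≥ 1, R > 0. There exists a constant c = c(d,R,s) > 0 such that for every f in the specialized space X^s(ℝ^d) one has ∫_{B(0,R)} |f̂(ξ)| dξ + (∫_{B(0,R)^c} (1+|ξ|²)^s |f̂(ξ)|² dξ)^{1/2} ≤ c‖f‖_{X^s}. In particular, if s > d/2, then f̂ ∈ L¹(ℝ^d) and ‖f̂‖_{L¹} ≤ c‖f‖_{X^s}. -/
open MeasureTheory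
open scoped ENNReal NNReal

section aux

open Real

lemma omegaD_meas (d : ℕ) (hd : 0 < d) (s : ℝ) : Measurable (omegaD d hd s) := by
  unfold omegaD
  have h0 : Measurable fun ξ : EuclideanSpace ℝ (Fin d) => ξ ⟨0, hd⟩ :=
    (EuclideanSpace.proj (⟨0, hd⟩ : Fin d)).continuous.measurable
  have hn : Measurable fun ξ : EuclideanSpace ℝ (Fin d) => ‖ξ‖ := measurable_norm
  exact Measurable.ite (measurableSet_lt hn measurable_const) (by fun_prop) (by fun_prop)

lemma omegaD_pos (d : ℕ) (hd : 0 < d) (s : ℝ) (ξ : EuclideanSpace ℝ (Fin d)) (hξ : ξ ≠ 0) :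
    0 < omegaD d hd s ξ := by
  unfold omegaD
  split_ifs with h
  · have hn : 0 < ‖ξ‖ := norm_pos_iff.mpr hξ
    have h4 : (0:ℝ) < ‖ξ‖ ^ 4 := by positivity
    positivity
  · positivity

lemma lint_cauchy {a : ℝ} (ha : 0 < a) :
    ∫⁻ t : ℝ, ENNReal.ofReal (a / (t ^ 2 + a ^ 2)) = ENNReal.ofReal π := by
  have hfun : (fun t : ℝ => a / (t ^ 2 + a ^ 2))
      = fun t : ℝ => a⁻¹ * (1 + (t / a) ^ 2)⁻¹ := by
    funext t; field_simp; ring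
  have hint : Integrable (fun t : ℝ => a / (t ^ 2 + a ^ 2)) := by
    rw [hfun]
    exact (integrable_inv_one_add_sq.comp_div ha.ne').const_mul _
  rw [← ofReal_integral_eq_lintegral_ofReal hint
      (Filter.Eventually.of_forall fun t => by positivity)]
  congr 1
  rw [hfun, MeasureTheory.integral_const_mul,
    MeasureTheory.Measure.integral_comp_div (fun u : ℝ => (1 + u ^ 2)⁻¹) a,
    integral_univ_inv_one_add_sq, abs_of_pos ha, smul_eq_mul]
  field_simp

lemma key_finite (m : ℕ) (hd : 0 < m + 1) (s : ℝ) (hs : 0 ≤ s) (R : ℝ) :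
    ∫⁻ ξ in Metric.ball (0 : EuclideanSpace ℝ (Fin (m + 1))) R,
      (ENNReal.ofReal (omegaD (m + 1) hd s ξ))⁻¹ < ⊤ := by
  set E := EuclideanSpace ℝ (Fin (m + 1))
  set q : (Fin m → ℝ) → ℝ := fun y => ∑ i, y i ^ 2 with hq_def
  have hq_nonneg : ∀ y, 0 ≤ q y := fun y => Finset.sum_nonneg fun i _ => sq_nonneg _
  have hq_meas : Measurable q := by fun_prop
  set G : ℝ × (Fin m → ℝ) → ℝ≥0∞ := fun p =>
    if q p.2 ≤ 1 then ENNReal.ofReal (q p.2 / (p.1 ^ 2 + q p.2 ^ 2)) else 0 with hG_def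
  have hG_meas : Measurable G := by
    refine Measurable.ite ?_ (by fun_prop) measurable_const
    exact measurableSet_le (hq_meas.comp measurable_snd) measurable_const
  set Φ : E → ℝ × (Fin m → ℝ) := fun ξ =>
    (MeasurableEquiv.piFinSuccAbove (fun _ : Fin (m + 1) => ℝ) 0)
      ((MeasurableEquiv.toLp 2 (Fin (m + 1) → ℝ)).symm ξ) with hΦ_def
  have hΦ : MeasurePreserving Φ volume volume :=
    (volume_preserving_piFinSuccAbove (fun _ : Fin (m + 1) => ℝ) 0).comp
      (EuclideanSpace.volume_preserving_symm_measurableEquiv_toLp (Fin (m + 1)))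
  -- decomposition of the norm
  have hsum : ∀ ξ : E, ξ ⟨0, hd⟩ ^ 2 + q (Φ ξ).2 = ‖ξ‖ ^ 2 := by
    intro ξ
    have h1 : ‖ξ‖ ^ 2 = ∑ i, ξ i ^ 2 := by
      rw [EuclideanSpace.norm_eq, sq_sqrt (Finset.sum_nonneg fun i _ => sq_nonneg _)]
      simp [Real.norm_eq_abs, sq_abs]
    rw [h1, Fin.sum_univ_succAbove (fun i => ξ i ^ 2) 0]
    rfl
  -- pointwise bound
  have hpt : ∀ ξ : E, ξ ≠ 0 →
      (ENNReal.ofReal (omegaD (m + 1) hd s ξ))⁻¹ ≤ 1 + G (Φ ξ) := by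
    intro ξ hξ
    by_cases h1 : ‖ξ‖ < 1
    · have hn : 0 < ‖ξ‖ := norm_pos_iff.mpr hξ
      set t := ξ ⟨0, hd⟩
      set qv := q (Φ ξ).2 with hqv
      have hqvn : 0 ≤ qv := hq_nonneg _
      have hkey : t ^ 2 + qv = ‖ξ‖ ^ 2 := hsum ξ
      have hω : omegaD (m + 1) hd s ξ = (t ^ 2 + ‖ξ‖ ^ 4) / ‖ξ‖ ^ 2 := by
        rw [omegaD, if_pos h1]
      have hωpos : 0 < omegaD (m + 1) hd s ξ := by
        rw [hω]; positivity
      rw [← ENNReal.ofReal_inv_of_pos hωpos]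
      have hqv1 : qv ≤ 1 := by nlinarith [sq_nonneg t]
      have hGval : G (Φ ξ) = ENNReal.ofReal (qv / (t ^ 2 + qv ^ 2)) := by
        have hfst : (Φ ξ).1 = t := rfl
        rw [hG_def]
        simp only [if_pos hqv1, hfst, ← hqv]
      rw [hGval, ← ENNReal.ofReal_one, ← ENNReal.ofReal_add zero_le_one (by positivity)]
      refine ENNReal.ofReal_le_ofReal ?_
      rw [hω]
      have hinv : ((t ^ 2 + ‖ξ‖ ^ 4) / ‖ξ‖ ^ 2)⁻¹ = ‖ξ‖ ^ 2 / (t ^ 2 + ‖ξ‖ ^ 4) := by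
        rw [inv_div]
      rw [hinv, ← hkey]
      have hq2 : qv ^ 2 ≤ ‖ξ‖ ^ 4 := by nlinarith
      have hden : (0:ℝ) < t ^ 2 + ‖ξ‖ ^ 4 := by positivity
      have h1' : t ^ 2 / (t ^ 2 + ‖ξ‖ ^ 4) ≤ 1 := by
        rw [div_le_one hden]; nlinarith
      have h2' : qv / (t ^ 2 + ‖ξ‖ ^ 4) ≤ qv / (t ^ 2 + qv ^ 2) := by
        rcases eq_or_lt_of_le hqvn with h | h
        · simp [← h]
        · gcongr
      calc (t ^ 2 + qv) / (t ^ 2 + ‖ξ‖ ^ 4)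
          = t ^ 2 / (t ^ 2 + ‖ξ‖ ^ 4) + qv / (t ^ 2 + ‖ξ‖ ^ 4) := by ring
        _ ≤ 1 + qv / (t ^ 2 + qv ^ 2) := add_le_add h1' h2'
    · have hω : omegaD (m + 1) hd s ξ = (1 + ‖ξ‖ ^ 2) ^ s := by
        rw [omegaD, if_neg h1]
      have h1le : (1:ℝ) ≤ (1 + ‖ξ‖ ^ 2) ^ s :=
        Real.one_le_rpow (by nlinarith [sq_nonneg ‖ξ‖]) hs
      calc (ENNReal.ofReal (omegaD (m + 1) hd s ξ))⁻¹ ≤ 1 := by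
            rw [ENNReal.inv_le_one, hω]
            exact le_trans (by norm_num) (ENNReal.ofReal_le_ofReal h1le)
        _ ≤ 1 + G (Φ ξ) := le_self_add
  have hnull : (volume : Measure E) {0} = 0 := measure_singleton 0
  have h0 : ∀ᵐ ξ : E ∂volume, ξ ≠ 0 := by
    rw [ae_iff]
    simpa using hnull
  have hqset : MeasurableSet {y : Fin m → ℝ | q y ≤ 1} :=
    measurableSet_le hq_meas measurable_const
  -- inner integral bound
  have hinner : ∀ y : Fin m → ℝ, (∫⁻ t : ℝ, G (t, y)) ≤
      Set.indicator {y' : Fin m → ℝ | q y' ≤ 1} (fun _ => ENNReal.ofReal π) y := by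
    intro y
    by_cases h1 : q y ≤ 1
    · rw [Set.indicator_of_mem (show y ∈ {y' : Fin m → ℝ | q y' ≤ 1} from h1)]
      rcases eq_or_lt_of_le (hq_nonneg y) with h0' | h0'
      · have : ∀ t : ℝ, G (t, y) = 0 := by
          intro t
          simp [hG_def, h1, ← h0']
        simp only [this, lintegral_zero]
        positivity
      · have : ∀ t : ℝ, G (t, y) = ENNReal.ofReal (q y / (t ^ 2 + q y ^ 2)) := by
          intro t
          simp [hG_def, h1]
        simp only [this]
        exact le_of_eq (lint_cauchy h0')
    · rw [Set.indicator_of_notMem (show y ∉ {y' : Fin m → ℝ | q y' ≤ 1} from h1)]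
      have : ∀ t : ℝ, G (t, y) = 0 := fun t => by simp [hG_def, h1]
      simp [this]
  -- volume of sub-level set of q is finite
  have hqvol : volume {y : Fin m → ℝ | q y ≤ 1} < ⊤ := by
    have hsub : {y : Fin m → ℝ | q y ≤ 1} ⊆ Set.pi Set.univ fun _ => Set.Icc (-1 : ℝ) 1 := by
      intro y hy
      intro i _
      have h2 : y i ^ 2 ≤ q y :=
        Finset.single_le_sum (fun j _ => sq_nonneg (y j)) (Finset.mem_univ i)
      have h3 : y i ^ 2 ≤ 1 := le_trans h2 hy
      simp only [Set.mem_Icc]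
      constructor <;> nlinarith
    refine lt_of_le_of_lt (measure_mono hsub) ?_
    rw [volume_pi_pi]
    simp [Real.volume_Icc]
  calc ∫⁻ ξ in Metric.ball (0 : E) R, (ENNReal.ofReal (omegaD (m + 1) hd s ξ))⁻¹
      ≤ ∫⁻ ξ in Metric.ball (0 : E) R, (1 + G (Φ ξ)) :=
        lintegral_mono_ae ((ae_restrict_of_ae h0).mono fun ξ h => hpt ξ h)
    _ = volume (Metric.ball (0 : E) R) + ∫⁻ ξ in Metric.ball (0 : E) R, G (Φ ξ) := by
        rw [lintegral_add_left measurable_const, lintegral_const,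
          Measure.restrict_apply MeasurableSet.univ, Set.univ_inter, one_mul]
    _ ≤ volume (Metric.ball (0 : E) R) + ∫⁻ ξ, G (Φ ξ) :=
        add_le_add_right (setLIntegral_le_lintegral _ _) _
    _ = volume (Metric.ball (0 : E) R) + ∫⁻ p, G p := by
        rw [hΦ.lintegral_comp hG_meas]
    _ = volume (Metric.ball (0 : E) R) + ∫⁻ y, ∫⁻ t, G (t, y) := by
        rw [MeasureTheory.Measure.volume_eq_prod, lintegral_prod_symm' G hG_meas]
    _ ≤ volume (Metric.ball (0 : E) R) +
        ∫⁻ y, Set.indicator {y' : Fin m → ℝ | q y' ≤ 1} (fun _ => ENNReal.ofReal π) y :=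
        add_le_add_right (lintegral_mono hinner) _
    _ = volume (Metric.ball (0 : E) R) + ENNReal.ofReal π * volume {y' : Fin m → ℝ | q y' ≤ 1} := by
        rw [lintegral_indicator_const hqset]
    _ < ⊤ := by
        refine ENNReal.add_lt_top.mpr ⟨measure_ball_lt_top, ?_⟩
        exact ENNReal.mul_lt_top ENNReal.ofReal_lt_top hqvol

lemma key_finite_compl (m : ℕ) (hd : 0 < m + 1) (s : ℝ) (hs : 0 ≤ s) (R : ℝ) (hR : 0 < R)
    (hds : ((m + 1 : ℕ) : ℝ) / 2 < s) :
    ∫⁻ ξ in (Metric.ball (0 : EuclideanSpace ℝ (Fin (m + 1))) R)ᶜ,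
      (ENNReal.ofReal (omegaD (m + 1) hd s ξ))⁻¹ < ⊤ := by
  set E := EuclideanSpace ℝ (Fin (m + 1))
  set C : ℝ := max 1 ((R ^ 2)⁻¹ * 2 ^ s) with hC_def
  have hC1 : (1:ℝ) ≤ C := le_max_left _ _
  have hC0 : (0:ℝ) ≤ C := le_trans zero_le_one hC1
  have hpt : ∀ ξ : E, ξ ∈ (Metric.ball (0 : E) R)ᶜ →
      (ENNReal.ofReal (omegaD (m + 1) hd s ξ))⁻¹ ≤
        ENNReal.ofReal C * ENNReal.ofReal ((1 + ‖ξ‖ ^ 2) ^ (-s)) := by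
    intro ξ hξ
    have hRξ : R ≤ ‖ξ‖ := by
      simpa [Metric.mem_ball, dist_zero_right] using hξ
    have hn : 0 < ‖ξ‖ := lt_of_lt_of_le hR hRξ
    by_cases h1 : ‖ξ‖ < 1
    · have hω : omegaD (m + 1) hd s ξ = (ξ ⟨0, hd⟩ ^ 2 + ‖ξ‖ ^ 4) / ‖ξ‖ ^ 2 := by
        rw [omegaD, if_pos h1]
      set t := ξ ⟨0, hd⟩
      have hωpos : 0 < omegaD (m + 1) hd s ξ := by rw [hω]; positivity
      have hω2 : R ^ 2 ≤ omegaD (m + 1) hd s ξ := by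
        rw [hω, le_div_iff₀ (by positivity)]
        nlinarith [sq_nonneg t, pow_le_pow_left₀ hR.le hRξ 2, sq_nonneg ‖ξ‖]
      rw [← ENNReal.ofReal_inv_of_pos hωpos, ← ENNReal.ofReal_mul hC0]
      refine ENNReal.ofReal_le_ofReal ?_
      have hstep1 : (omegaD (m + 1) hd s ξ)⁻¹ ≤ (R ^ 2)⁻¹ :=
        inv_anti₀ (by positivity) hω2
      have hstep2 : (2:ℝ) ^ (-s) ≤ (1 + ‖ξ‖ ^ 2) ^ (-s) := by
        rw [Real.rpow_neg (by norm_num), Real.rpow_neg (by positivity)]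
        refine inv_anti₀ (Real.rpow_pos_of_pos (by positivity) s) ?_
        exact Real.rpow_le_rpow (by positivity) (by nlinarith) hs
      calc (omegaD (m + 1) hd s ξ)⁻¹ ≤ (R ^ 2)⁻¹ := hstep1
        _ = (R ^ 2)⁻¹ * 2 ^ s * 2 ^ (-s) := by
            rw [mul_assoc, ← Real.rpow_add (by norm_num : (0:ℝ) < 2)]
            simp
        _ ≤ C * (1 + ‖ξ‖ ^ 2) ^ (-s) := by
            refine mul_le_mul (le_max_right _ _) hstep2 (by positivity) hC0
    · have hω : omegaD (m + 1) hd s ξ = (1 + ‖ξ‖ ^ 2) ^ s := by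
        rw [omegaD, if_neg h1]
      have hωpos : (0:ℝ) < (1 + ‖ξ‖ ^ 2) ^ s := Real.rpow_pos_of_pos (by positivity) s
      rw [hω, ← ENNReal.ofReal_inv_of_pos hωpos, ← Real.rpow_neg (by positivity)]
      calc ENNReal.ofReal ((1 + ‖ξ‖ ^ 2) ^ (-s))
          = 1 * ENNReal.ofReal ((1 + ‖ξ‖ ^ 2) ^ (-s)) := (one_mul _).symm
        _ ≤ ENNReal.ofReal C * ENNReal.ofReal ((1 + ‖ξ‖ ^ 2) ^ (-s)) := by
            refine mul_le_mul_left ?_ _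
            rw [← ENNReal.ofReal_one]
            exact ENNReal.ofReal_le_ofReal hC1
  have hint : Integrable (fun ξ : E => (1 + ‖ξ‖ ^ 2) ^ (-s)) := by
    have h2s : (Module.finrank ℝ E : ℝ) < 2 * s := by
      rw [show Module.finrank ℝ E = m + 1 from finrank_euclideanSpace_fin]
      push_cast
      push_cast at hds
      linarith
    have h := integrable_rpow_neg_one_add_norm_sq (E := E) (μ := volume) h2s
    convert h using 2 with ξ
    ring_nf
  calc ∫⁻ ξ in (Metric.ball (0 : E) R)ᶜ, (ENNReal.ofReal (omegaD (m + 1) hd s ξ))⁻¹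
      ≤ ∫⁻ ξ in (Metric.ball (0 : E) R)ᶜ,
          ENNReal.ofReal C * ENNReal.ofReal ((1 + ‖ξ‖ ^ 2) ^ (-s)) := by
        refine lintegral_mono_ae ?_
        filter_upwards [ae_restrict_mem measurableSet_ball.compl] with ξ hξ
        exact hpt ξ hξ
    _ = ENNReal.ofReal C * ∫⁻ ξ in (Metric.ball (0 : E) R)ᶜ,
          ENNReal.ofReal ((1 + ‖ξ‖ ^ 2) ^ (-s)) := lintegral_const_mul' _ _ ENNReal.ofReal_ne_top
    _ ≤ ENNReal.ofReal C * ∫⁻ ξ, ENNReal.ofReal ((1 + ‖ξ‖ ^ 2) ^ (-s)) :=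
        mul_le_mul_right (setLIntegral_le_lintegral _ _) _
    _ = ENNReal.ofReal C * ENNReal.ofReal (∫ ξ, (1 + ‖ξ‖ ^ 2) ^ (-s)) := by
        rw [ofReal_integral_eq_lintegral_ofReal hint
          (Filter.Eventually.of_forall fun ξ => by positivity)]
    _ < ⊤ := ENNReal.mul_lt_top ENNReal.ofReal_lt_top ENNReal.ofReal_lt_top

lemma cs_lemma {α : Type*} [MeasurableSpace α] (μ : Measure α) (w : α → ℝ≥0∞)
    (hw : AEMeasurable w μ) (F : α → ℂ) (hF : AEMeasurable F μ)
    (hw0 : ∀ᵐ ξ ∂μ, w ξ ≠ 0) (hwtop : ∀ᵐ ξ ∂μ, w ξ ≠ ⊤) :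
    ∫⁻ ξ, (‖F ξ‖₊ : ℝ≥0∞) ∂μ ≤
      (∫⁻ ξ, (w ξ)⁻¹ ∂μ) ^ (1/2 : ℝ) * (∫⁻ ξ, w ξ * (‖F ξ‖₊ : ℝ≥0∞) ^ 2 ∂μ) ^ (1/2 : ℝ) := by
  set f : α → ℝ≥0∞ := fun ξ => ((w ξ)⁻¹) ^ (1/2 : ℝ) with hf_def
  set g : α → ℝ≥0∞ := fun ξ => (w ξ * (‖F ξ‖₊ : ℝ≥0∞) ^ 2) ^ (1/2 : ℝ) with hg_def
  have hfm : AEMeasurable f μ := hw.inv.pow_const _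
  have hgm : AEMeasurable g μ := (hw.mul (hF.nnnorm.coe_nnreal_ennreal.pow_const 2)).pow_const _
  have hpq : Real.HolderConjugate 2 2 := ⟨by norm_num, by norm_num, by norm_num⟩
  have key := ENNReal.lintegral_mul_le_Lp_mul_Lq μ hpq hfm hgm
  have heq : ∫⁻ ξ, (‖F ξ‖₊ : ℝ≥0∞) ∂μ = ∫⁻ ξ, f ξ * g ξ ∂μ := by
    refine lintegral_congr_ae ?_
    filter_upwards [hw0, hwtop] with ξ h0 htop
    rw [hf_def, hg_def]
    simp only
    rw [← ENNReal.mul_rpow_of_nonneg _ _ (by norm_num : (0:ℝ) ≤ 1/2), ← mul_assoc,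
      ENNReal.inv_mul_cancel h0 htop, one_mul, ← ENNReal.rpow_natCast (‖F ξ‖₊ : ℝ≥0∞) 2,
      ← ENNReal.rpow_mul]
    norm_num
  have hfp : ∫⁻ ξ, f ξ ^ (2:ℝ) ∂μ = ∫⁻ ξ, (w ξ)⁻¹ ∂μ := by
    refine lintegral_congr fun ξ => ?_
    rw [hf_def]; simp only
    rw [← ENNReal.rpow_mul]; norm_num
  have hgp : ∫⁻ ξ, g ξ ^ (2:ℝ) ∂μ = ∫⁻ ξ, w ξ * (‖F ξ‖₊ : ℝ≥0∞) ^ 2 ∂μ := by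
    refine lintegral_congr fun ξ => ?_
    rw [hg_def]; simp only
    rw [← ENNReal.rpow_mul]; norm_num
  rw [heq]
  calc ∫⁻ ξ, f ξ * g ξ ∂μ
      ≤ (∫⁻ ξ, f ξ ^ (2:ℝ) ∂μ) ^ (1/2:ℝ) * (∫⁻ ξ, g ξ ^ (2:ℝ) ∂μ) ^ (1/2:ℝ) := by
        simpa using key
    _ = _ := by rw [hfp, hgp]

end aux

/-- (Fourier-side formulation; `F` represents `f̂` and
`‖f‖²_{X^s} = ∫ ω_s |F|²`.)  For `s ≥ 0` and `R > 0` there is `c = c(d,R,s) > 0` with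
`∫_{B(0,R)} |f̂| dξ + (∫_{B(0,R)^c} (1+|ξ|²)^s |f̂|² dξ)^{1/2} ≤ c ‖f‖_{X^s}` for every
`f ∈ X^s(ℝ^d)`.  In particular, if `s > d/2` then `f̂ ∈ L¹(ℝ^d)` with
`‖f̂‖_{L¹} ≤ c ‖f‖_{X^s}`. -/
theorem stmt_10 (d : ℕ) (hd : 0 < d) (s : ℝ) (hs : 0 ≤ s) (R : ℝ) (hR : 0 < R) :
    ∃ c : ℝ, 0 < c ∧
      (∀ F : EuclideanSpace ℝ (Fin d) → ℂ, AEMeasurable F →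
        (∫⁻ ξ in Metric.ball 0 R, (‖F ξ‖₊ : ℝ≥0∞)) +
            (∫⁻ ξ in (Metric.ball (0 : EuclideanSpace ℝ (Fin d)) R)ᶜ,
              ENNReal.ofReal ((1 + ‖ξ‖ ^ 2) ^ s) * (‖F ξ‖₊ : ℝ≥0∞) ^ 2) ^ (1/2 : ℝ)
          ≤ ENNReal.ofReal c *
            (∫⁻ ξ, ENNReal.ofReal (omegaD d hd s ξ) * (‖F ξ‖₊ : ℝ≥0∞) ^ 2) ^ (1/2 : ℝ)) ∧
      ((d : ℝ) / 2 < s →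
        ∀ F : EuclideanSpace ℝ (Fin d) → ℂ, AEMeasurable F →
          (∫⁻ ξ, (‖F ξ‖₊ : ℝ≥0∞))
            ≤ ENNReal.ofReal c *
              (∫⁻ ξ, ENNReal.ofReal (omegaD d hd s ξ) * (‖F ξ‖₊ : ℝ≥0∞) ^ 2) ^ (1/2 : ℝ)) := by
  obtain ⟨m, rfl⟩ : ∃ m, d = m + 1 := ⟨d - 1, (Nat.succ_pred_eq_of_pos hd).symm⟩
  set E := EuclideanSpace ℝ (Fin (m + 1))
  have hω_meas : Measurable (omegaD (m + 1) hd s) := omegaD_meas _ _ _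
  have hw_meas : Measurable (fun ξ : E => ENNReal.ofReal (omegaD (m + 1) hd s ξ)) :=
    ENNReal.measurable_ofReal.comp hω_meas
  have hnull : (volume : Measure E) {0} = 0 := measure_singleton 0
  have hae0 : ∀ᵐ ξ : E ∂volume, ξ ≠ 0 := by
    rw [ae_iff]; simpa using hnull
  have hwpos : ∀ᵐ ξ : E ∂volume, ENNReal.ofReal (omegaD (m + 1) hd s ξ) ≠ 0 :=
    hae0.mono fun ξ h => (ENNReal.ofReal_pos.mpr (omegaD_pos _ _ _ _ h)).ne'
  have hwtop : ∀ᵐ ξ : E ∂volume, ENNReal.ofReal (omegaD (m + 1) hd s ξ) ≠ ⊤ :=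
    Filter.Eventually.of_forall fun ξ => ENNReal.ofReal_ne_top
  -- constants
  set K₁ : ℝ≥0∞ := ∫⁻ ξ in Metric.ball (0 : E) R,
    (ENNReal.ofReal (omegaD (m + 1) hd s ξ))⁻¹ with hK₁_def
  have hK₁fin : K₁ < ⊤ := key_finite m hd s hs R
  set c₁ : ℝ := (K₁ ^ (1/2:ℝ)).toReal with hc₁_def
  have hc₁ : ENNReal.ofReal c₁ = K₁ ^ (1/2:ℝ) :=
    ENNReal.ofReal_toReal (ENNReal.rpow_lt_top_of_nonneg (by norm_num) hK₁fin.ne).ne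
  have hc₁0 : 0 ≤ c₁ := ENNReal.toReal_nonneg
  set C₂ : ℝ := max 1 ((R ^ 2)⁻¹ * 2 ^ s) with hC₂_def
  have hC₂1 : (1:ℝ) ≤ C₂ := le_max_left _ _
  have hC₂0 : (0:ℝ) < C₂ := lt_of_lt_of_le one_pos hC₂1
  set c₂ : ℝ := C₂ ^ (1/2:ℝ) with hc₂_def
  have hc₂0 : 0 ≤ c₂ := Real.rpow_nonneg hC₂0.le _
  have hc₂ : ENNReal.ofReal c₂ = (ENNReal.ofReal C₂) ^ (1/2:ℝ) :=
    (ENNReal.ofReal_rpow_of_pos hC₂0).symm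
  set K₃ : ℝ≥0∞ := ∫⁻ ξ in (Metric.ball (0 : E) R)ᶜ,
    (ENNReal.ofReal (omegaD (m + 1) hd s ξ))⁻¹ with hK₃_def
  set c₃ : ℝ := (K₃ ^ (1/2:ℝ)).toReal with hc₃_def
  have hc₃0 : 0 ≤ c₃ := ENNReal.toReal_nonneg
  refine ⟨c₁ + c₂ + c₃ + 1, by linarith, ?_, ?_⟩
  · -- part A
    intro F hF
    set I : ℝ≥0∞ := ∫⁻ ξ, ENNReal.ofReal (omegaD (m + 1) hd s ξ) * (‖F ξ‖₊ : ℝ≥0∞) ^ 2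
      with hI_def
    -- term 1
    have hT1 : (∫⁻ ξ in Metric.ball (0 : E) R, (‖F ξ‖₊ : ℝ≥0∞)) ≤
        ENNReal.ofReal c₁ * I ^ (1/2:ℝ) := by
      have hcs := cs_lemma (volume.restrict (Metric.ball (0 : E) R))
        (fun ξ => ENNReal.ofReal (omegaD (m + 1) hd s ξ)) hw_meas.aemeasurable F hF.restrict
        (ae_restrict_of_ae hwpos) (ae_restrict_of_ae hwtop)
      refine le_trans hcs ?_
      rw [hc₁]
      refine mul_le_mul_right ?_ _
      exact ENNReal.rpow_le_rpow (setLIntegral_le_lintegral _ _) (by norm_num)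
    -- term 2
    have hpt2 : ∀ ξ : E, ξ ∈ (Metric.ball (0 : E) R)ᶜ →
        ENNReal.ofReal ((1 + ‖ξ‖ ^ 2) ^ s) ≤
          ENNReal.ofReal C₂ * ENNReal.ofReal (omegaD (m + 1) hd s ξ) := by
      intro ξ hξ
      have hRξ : R ≤ ‖ξ‖ := by
        simpa [Metric.mem_ball, dist_zero_right] using hξ
      have hn : 0 < ‖ξ‖ := lt_of_lt_of_le hR hRξ
      by_cases h1 : ‖ξ‖ < 1
      · have hω : omegaD (m + 1) hd s ξ = (ξ ⟨0, hd⟩ ^ 2 + ‖ξ‖ ^ 4) / ‖ξ‖ ^ 2 := by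
          rw [omegaD, if_pos h1]
        set t := ξ ⟨0, hd⟩
        have hω2 : R ^ 2 ≤ omegaD (m + 1) hd s ξ := by
          rw [hω, le_div_iff₀ (by positivity)]
          nlinarith [sq_nonneg t, pow_le_pow_left₀ hR.le hRξ 2, sq_nonneg ‖ξ‖]
        rw [← ENNReal.ofReal_mul hC₂0.le]
        refine ENNReal.ofReal_le_ofReal ?_
        have hle2 : (1 + ‖ξ‖ ^ 2) ^ s ≤ 2 ^ s :=
          Real.rpow_le_rpow (by positivity) (by nlinarith) hs
        have heq2 : (2:ℝ) ^ s = (R ^ 2)⁻¹ * 2 ^ s * R ^ 2 := by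
          field_simp
        calc (1 + ‖ξ‖ ^ 2) ^ s ≤ (R ^ 2)⁻¹ * 2 ^ s * R ^ 2 := by rw [← heq2]; exact hle2
          _ ≤ C₂ * omegaD (m + 1) hd s ξ := by
              refine mul_le_mul (le_max_right _ _) hω2 (by positivity) hC₂0.le
      · have hω : omegaD (m + 1) hd s ξ = (1 + ‖ξ‖ ^ 2) ^ s := by
          rw [omegaD, if_neg h1]
        rw [hω]
        calc ENNReal.ofReal ((1 + ‖ξ‖ ^ 2) ^ s)
            = 1 * ENNReal.ofReal ((1 + ‖ξ‖ ^ 2) ^ s) := (one_mul _).symm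
          _ ≤ ENNReal.ofReal C₂ * ENNReal.ofReal ((1 + ‖ξ‖ ^ 2) ^ s) := by
              refine mul_le_mul_left ?_ _
              rw [← ENNReal.ofReal_one]
              exact ENNReal.ofReal_le_ofReal hC₂1
    have hT2 : (∫⁻ ξ in (Metric.ball (0 : E) R)ᶜ,
        ENNReal.ofReal ((1 + ‖ξ‖ ^ 2) ^ s) * (‖F ξ‖₊ : ℝ≥0∞) ^ 2) ^ (1/2:ℝ) ≤
        ENNReal.ofReal c₂ * I ^ (1/2:ℝ) := by
      have hstep : (∫⁻ ξ in (Metric.ball (0 : E) R)ᶜ,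
          ENNReal.ofReal ((1 + ‖ξ‖ ^ 2) ^ s) * (‖F ξ‖₊ : ℝ≥0∞) ^ 2) ≤
          ENNReal.ofReal C₂ * I := by
        calc (∫⁻ ξ in (Metric.ball (0 : E) R)ᶜ,
            ENNReal.ofReal ((1 + ‖ξ‖ ^ 2) ^ s) * (‖F ξ‖₊ : ℝ≥0∞) ^ 2)
            ≤ ∫⁻ ξ in (Metric.ball (0 : E) R)ᶜ,
              ENNReal.ofReal C₂ * (ENNReal.ofReal (omegaD (m + 1) hd s ξ) *
                (‖F ξ‖₊ : ℝ≥0∞) ^ 2) := by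
              refine lintegral_mono_ae ?_
              filter_upwards [ae_restrict_mem measurableSet_ball.compl] with ξ hξ
              rw [← mul_assoc]
              exact mul_le_mul_left (hpt2 ξ hξ) _
          _ = ENNReal.ofReal C₂ * ∫⁻ ξ in (Metric.ball (0 : E) R)ᶜ,
              ENNReal.ofReal (omegaD (m + 1) hd s ξ) * (‖F ξ‖₊ : ℝ≥0∞) ^ 2 :=
              lintegral_const_mul' _ _ ENNReal.ofReal_ne_top
          _ ≤ ENNReal.ofReal C₂ * I :=
              mul_le_mul_right (setLIntegral_le_lintegral _ _) _
      calc (∫⁻ ξ in (Metric.ball (0 : E) R)ᶜ,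
          ENNReal.ofReal ((1 + ‖ξ‖ ^ 2) ^ s) * (‖F ξ‖₊ : ℝ≥0∞) ^ 2) ^ (1/2:ℝ)
          ≤ (ENNReal.ofReal C₂ * I) ^ (1/2:ℝ) :=
            ENNReal.rpow_le_rpow hstep (by norm_num)
        _ = ENNReal.ofReal c₂ * I ^ (1/2:ℝ) := by
            rw [ENNReal.mul_rpow_of_nonneg _ _ (by norm_num : (0:ℝ) ≤ 1/2), hc₂]
    calc (∫⁻ ξ in Metric.ball (0 : E) R, (‖F ξ‖₊ : ℝ≥0∞)) +
        (∫⁻ ξ in (Metric.ball (0 : E) R)ᶜ,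
          ENNReal.ofReal ((1 + ‖ξ‖ ^ 2) ^ s) * (‖F ξ‖₊ : ℝ≥0∞) ^ 2) ^ (1/2:ℝ)
        ≤ ENNReal.ofReal c₁ * I ^ (1/2:ℝ) + ENNReal.ofReal c₂ * I ^ (1/2:ℝ) :=
          add_le_add hT1 hT2
      _ = (ENNReal.ofReal c₁ + ENNReal.ofReal c₂) * I ^ (1/2:ℝ) := (add_mul _ _ _).symm
      _ ≤ ENNReal.ofReal (c₁ + c₂ + c₃ + 1) * I ^ (1/2:ℝ) := by
          refine mul_le_mul_left ?_ _
          rw [← ENNReal.ofReal_add hc₁0 hc₂0]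
          exact ENNReal.ofReal_le_ofReal (by linarith)
  · -- part B
    intro hds F hF
    have hK₃fin : K₃ < ⊤ := key_finite_compl m hd s hs R hR (by exact_mod_cast hds)
    have hc₃ : ENNReal.ofReal c₃ = K₃ ^ (1/2:ℝ) :=
      ENNReal.ofReal_toReal (ENNReal.rpow_lt_top_of_nonneg (by norm_num) hK₃fin.ne).ne
    set I : ℝ≥0∞ := ∫⁻ ξ, ENNReal.ofReal (omegaD (m + 1) hd s ξ) * (‖F ξ‖₊ : ℝ≥0∞) ^ 2
      with hI_def
    have hT1 : (∫⁻ ξ in Metric.ball (0 : E) R, (‖F ξ‖₊ : ℝ≥0∞)) ≤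
        ENNReal.ofReal c₁ * I ^ (1/2:ℝ) := by
      have hcs := cs_lemma (volume.restrict (Metric.ball (0 : E) R))
        (fun ξ => ENNReal.ofReal (omegaD (m + 1) hd s ξ)) hw_meas.aemeasurable F hF.restrict
        (ae_restrict_of_ae hwpos) (ae_restrict_of_ae hwtop)
      refine le_trans hcs ?_
      rw [hc₁]
      refine mul_le_mul_right ?_ _
      exact ENNReal.rpow_le_rpow (setLIntegral_le_lintegral _ _) (by norm_num)
    have hT3 : (∫⁻ ξ in (Metric.ball (0 : E) R)ᶜ, (‖F ξ‖₊ : ℝ≥0∞)) ≤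
        ENNReal.ofReal c₃ * I ^ (1/2:ℝ) := by
      have hcs := cs_lemma (volume.restrict (Metric.ball (0 : E) R)ᶜ)
        (fun ξ => ENNReal.ofReal (omegaD (m + 1) hd s ξ)) hw_meas.aemeasurable F hF.restrict
        (ae_restrict_of_ae hwpos) (ae_restrict_of_ae hwtop)
      refine le_trans hcs ?_
      rw [hc₃]
      refine mul_le_mul_right ?_ _
      exact ENNReal.rpow_le_rpow (setLIntegral_le_lintegral _ _) (by norm_num)
    calc (∫⁻ ξ, (‖F ξ‖₊ : ℝ≥0∞))
        = (∫⁻ ξ in Metric.ball (0 : E) R, (‖F ξ‖₊ : ℝ≥0∞)) +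
          (∫⁻ ξ in (Metric.ball (0 : E) R)ᶜ, (‖F ξ‖₊ : ℝ≥0∞)) :=
          (lintegral_add_compl _ measurableSet_ball).symm
      _ ≤ ENNReal.ofReal c₁ * I ^ (1/2:ℝ) + ENNReal.ofReal c₃ * I ^ (1/2:ℝ) :=
          add_le_add hT1 hT3
      _ = (ENNReal.ofReal c₁ + ENNReal.ofReal c₃) * I ^ (1/2:ℝ) := (add_mul _ _ _).symm
      _ ≤ ENNReal.ofReal (c₁ + c₂ + c₃ + 1) * I ^ (1/2:ℝ) := by
          refine mul_le_mul_left ?_ _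
          rw [← ENNReal.ofReal_add hc₁0 hc₃0]
          exact ENNReal.ofReal_le_ofReal (by linarith)
end

section
/- Let s > d/2. There exists c = c(d,s) > 0 such that ‖fg‖_{H^s} ≤ c‖f‖_{X^s}‖g‖_{H^s} for all f ∈ X^s(ℝ^d) and g ∈ H^s(ℝ^d); in particular multiplication by an element of X^s(ℝ^d) is a bounded operator on H^s(ℝ^d). -/
open MeasureTheory
open scoped ENNReal NNReal

section Aux1
open Real
variable {d : ℕ}
local notation "V" => EuclideanSpace ℝ (Fin d)

lemma mp_sub_left (a : V) : MeasurePreserving (fun x : V => a - x) volume volume := by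
  have h1 := Measure.measurePreserving_neg (volume : Measure V)
  have h2 := measurePreserving_add_left (volume : Measure V) a
  have := h2.comp h1
  simpa [Function.comp_def, sub_eq_add_neg] using this

lemma lint_sub_left (f : V → ℝ≥0∞) (a : V) : ∫⁻ x, f (a - x) = ∫⁻ x, f x :=
  (mp_sub_left a).lintegral_comp_emb
    (MeasurableEquiv.subLeft a).measurableEmbedding f

lemma lint_sub_right (f : V → ℝ≥0∞) (a : V) : ∫⁻ x, f (x - a) = ∫⁻ x, f x :=
  lintegral_sub_right_eq_self f a

lemma sq_rpow_half (x : ℝ≥0∞) : (x ^ (1/2:ℝ)) ^ (2:ℕ) = x := by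
  rw [← ENNReal.rpow_natCast (x ^ (1/2:ℝ)) 2, ← ENNReal.rpow_mul]
  norm_num

lemma cs2 {α : Type*} [MeasurableSpace α] (μ : Measure α) (f g : α → ℝ≥0∞)
    (hf : AEMeasurable f μ) (hg : AEMeasurable g μ) :
    (∫⁻ x, f x * g x ∂μ) ^ (2:ℕ) ≤ (∫⁻ x, (f x) ^ (2:ℕ) ∂μ) * (∫⁻ x, (g x) ^ (2:ℕ) ∂μ) := by
  have hpq : Real.HolderConjugate 2 2 := Real.HolderConjugate.two_two
  have h := ENNReal.lintegral_mul_le_Lp_mul_Lq μ hpq hf hg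
  simp_rw [Pi.mul_apply] at h
  have h2 : (∫⁻ x, f x * g x ∂μ) ^ (2:ℕ)
      ≤ ((∫⁻ x, (f x) ^ (2:ℝ) ∂μ) ^ (1/2:ℝ) * (∫⁻ x, (g x) ^ (2:ℝ) ∂μ) ^ (1/2:ℝ)) ^ (2:ℕ) :=
    pow_le_pow_left' h 2
  rw [mul_pow, sq_rpow_half, sq_rpow_half] at h2
  have e : ∀ h : α → ℝ≥0∞, (∫⁻ x, h x ^ (2:ℝ) ∂μ) = ∫⁻ x, h x ^ (2:ℕ) ∂μ := fun h =>
    lintegral_congr fun x => by rw [← ENNReal.rpow_natCast]; norm_num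
  rwa [e f, e g] at h2

lemma rpow_half_sq (x : ℝ≥0∞) : x ^ (1/2:ℝ) * x ^ (1/2:ℝ) = x := by
  rw [← ENNReal.rpow_add_of_nonneg _ _ (by norm_num) (by norm_num)]
  norm_num

/-- Young: `‖a ∗ b‖₂ ≤ ‖a‖₁ ‖b‖₂` (squared, lintegral form). -/
lemma young1 (a b : V → ℝ≥0∞) (ha : Measurable a) (hb : Measurable b) :
    ∫⁻ ξ, (∫⁻ z, a z * b (ξ - z)) ^ (2:ℕ)
      ≤ (∫⁻ z, a z) ^ (2:ℕ) * ∫⁻ z, (b z) ^ (2:ℕ) := by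
  by_cases hbz : ∫⁻ z, (b z) ^ (2:ℕ) = 0
  · -- b = 0 a.e., so inner integral is 0 for each ξ
    have hb0 : ∀ᵐ z, b z = 0 := by
      have := (lintegral_eq_zero_iff (hb.pow_const 2)).mp hbz
      filter_upwards [this] with z hz
      simpa using hz
    have hbI : ∫⁻ z, b z = 0 := by
      rw [lintegral_eq_zero_iff hb]; exact hb0
    have hz : ∀ ξ, (∫⁻ z, a z * b (ξ - z)) = 0 := by
      intro ξ
      refine le_antisymm ?_ zero_le
      calc ∫⁻ z, a z * b (ξ - z) ≤ ∫⁻ z, ∞ * b (ξ - z) :=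
            lintegral_mono fun z => mul_le_mul_left le_top _
        _ = ∞ * ∫⁻ z, b (ξ - z) :=
            lintegral_const_mul _ (hb.comp (measurable_const.sub measurable_id))
        _ = ∞ * ∫⁻ z, b z := by rw [lint_sub_left b ξ]
        _ = 0 := by rw [hbI, mul_zero]
    simp [hz]
  by_cases hat : ∫⁻ z, a z = ∞
  · rw [hat]
    simp [ENNReal.top_pow, ENNReal.top_mul hbz, le_top]
  -- main case
  have key : ∀ ξ, (∫⁻ z, a z * b (ξ - z)) ^ (2:ℕ)
      ≤ (∫⁻ z, a z) * ∫⁻ z, a z * (b (ξ - z)) ^ (2:ℕ) := by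
    intro ξ
    have h := cs2 volume (fun z => (a z) ^ (1/2:ℝ))
      (fun z => (a z) ^ (1/2:ℝ) * b (ξ - z))
      ((ha.pow_const _).aemeasurable)
      (((ha.pow_const _).mul (hb.comp (measurable_const.sub measurable_id))).aemeasurable)
    calc (∫⁻ z, a z * b (ξ - z)) ^ (2:ℕ)
        = (∫⁻ z, (a z) ^ (1/2:ℝ) * ((a z) ^ (1/2:ℝ) * b (ξ - z))) ^ (2:ℕ) := by
          congr 1; exact lintegral_congr fun z => by rw [← mul_assoc, rpow_half_sq]
      _ ≤ (∫⁻ z, ((a z) ^ (1/2:ℝ)) ^ (2:ℕ)) * ∫⁻ z, ((a z) ^ (1/2:ℝ) * b (ξ - z)) ^ (2:ℕ) := h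
      _ = (∫⁻ z, a z) * ∫⁻ z, a z * (b (ξ - z)) ^ (2:ℕ) := by
          rw [lintegral_congr fun z => sq_rpow_half (a z)]
          congr 1
          exact lintegral_congr fun z => by rw [mul_pow, sq_rpow_half]
  calc ∫⁻ ξ, (∫⁻ z, a z * b (ξ - z)) ^ (2:ℕ)
      ≤ ∫⁻ ξ, (∫⁻ z, a z) * ∫⁻ z, a z * (b (ξ - z)) ^ (2:ℕ) := lintegral_mono key
    _ = (∫⁻ z, a z) * ∫⁻ ξ, ∫⁻ z, a z * (b (ξ - z)) ^ (2:ℕ) := lintegral_const_mul' _ _ hat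
    _ = (∫⁻ z, a z) * ∫⁻ z, ∫⁻ ξ, a z * (b (ξ - z)) ^ (2:ℕ) := by
        congr 1
        exact lintegral_lintegral_swap
          (((ha.comp measurable_snd).mul
            ((hb.comp (measurable_fst.sub measurable_snd)).pow_const 2)).aemeasurable)
    _ = (∫⁻ z, a z) * ((∫⁻ z, a z) * ∫⁻ w, (b w) ^ (2:ℕ)) := by
        congr 1
        calc ∫⁻ z, ∫⁻ ξ, a z * (b (ξ - z)) ^ (2:ℕ)
            = ∫⁻ z, a z * ∫⁻ ξ, (b (ξ - z)) ^ (2:ℕ) := by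
              exact lintegral_congr fun z =>
                lintegral_const_mul _ ((hb.comp (measurable_id.sub measurable_const)).pow_const 2)
          _ = ∫⁻ z, a z * ∫⁻ w, (b w) ^ (2:ℕ) := by
              exact lintegral_congr fun z => by rw [lint_sub_right (fun w => (b w) ^ (2:ℕ)) z]
          _ = (∫⁻ z, a z) * ∫⁻ w, (b w) ^ (2:ℕ) := by
              rw [lintegral_mul_const _ ha]
    _ = (∫⁻ z, a z) ^ (2:ℕ) * ∫⁻ z, (b z) ^ (2:ℕ) := by ring

lemma conv_comm (a b : V → ℝ≥0∞) (ξ : V) :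
    ∫⁻ z, a z * b (ξ - z) = ∫⁻ z, b z * a (ξ - z) := by
  calc ∫⁻ z, a z * b (ξ - z) = ∫⁻ z, (fun w => b w * a (ξ - w)) (ξ - z) := by
        refine lintegral_congr fun z => ?_
        simp only [sub_sub_cancel]
        rw [mul_comm]
    _ = ∫⁻ z, b z * a (ξ - z) := lint_sub_left (fun w => b w * a (ξ - w)) ξ

/-- Young, other orientation: `‖a ∗ b‖₂ ≤ ‖a‖₂ ‖b‖₁` (squared). -/
lemma young2 (a b : V → ℝ≥0∞) (ha : Measurable a) (hb : Measurable b) :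
    ∫⁻ ξ, (∫⁻ z, a z * b (ξ - z)) ^ (2:ℕ)
      ≤ (∫⁻ z, b z) ^ (2:ℕ) * ∫⁻ z, (a z) ^ (2:ℕ) := by
  simp_rw [fun ξ => conv_comm a b ξ]
  exact young1 b a hb ha

/-- Weighted Cauchy–Schwarz: `(∫ f)² ≤ (∫ w⁻¹) · (∫ w f²)`. -/
lemma weighted_cs (w f : V → ℝ≥0∞) (hw : Measurable w) (hf : Measurable f)
    (hw0 : ∀ᵐ x, w x ≠ 0) (hwt : ∀ x, w x ≠ ∞) :
    (∫⁻ x, f x) ^ (2:ℕ) ≤ (∫⁻ x, (w x)⁻¹) * ∫⁻ x, w x * (f x) ^ (2:ℕ) := by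
  have key : (∫⁻ x, f x) = ∫⁻ x, ((w x)⁻¹) ^ (1/2:ℝ) * ((w x) ^ (1/2:ℝ) * f x) := by
    refine lintegral_congr_ae ?_
    filter_upwards [hw0] with x hx
    rw [← mul_assoc, ← ENNReal.mul_rpow_of_ne_top (ENNReal.inv_ne_top.mpr hx) (hwt x),
      ENNReal.inv_mul_cancel hx (hwt x), ENNReal.one_rpow, one_mul]
  rw [key]
  calc (∫⁻ x, ((w x)⁻¹) ^ (1/2:ℝ) * ((w x) ^ (1/2:ℝ) * f x)) ^ (2:ℕ)
      ≤ (∫⁻ x, (((w x)⁻¹) ^ (1/2:ℝ)) ^ (2:ℕ)) * ∫⁻ x, ((w x) ^ (1/2:ℝ) * f x) ^ (2:ℕ) :=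
        cs2 volume _ _ ((hw.inv.pow_const _).aemeasurable)
          (((hw.pow_const _).mul hf).aemeasurable)
    _ = (∫⁻ x, (w x)⁻¹) * ∫⁻ x, w x * (f x) ^ (2:ℕ) := by
        rw [lintegral_congr fun x => sq_rpow_half ((w x)⁻¹)]
        congr 1
        exact lintegral_congr fun x => by rw [mul_pow, sq_rpow_half]

lemma pow_bound {s A B : ℝ} (hs : 0 ≤ s) (hA : 0 ≤ A) (hB : 0 ≤ B) (h : A ≤ 4*B) :
    A^(s/2) ≤ 2^s * B^(s/2) := by
  have h4 : ((4:ℝ))^(s/2) = 2^s := by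
    rw [show (4:ℝ) = 2*2 by norm_num, Real.mul_rpow (by norm_num) (by norm_num),
      ← Real.rpow_add (by norm_num)]
    ring_nf
  calc A^(s/2) ≤ (4*B)^(s/2) := Real.rpow_le_rpow hA h (by linarith)
    _ = 2^s * B^(s/2) := by rw [Real.mul_rpow (by norm_num) hB, h4]

lemma weight_ptwise {s : ℝ} (hs : 0 ≤ s) (ξ z : V) :
    (1+‖ξ‖^2)^(s/2) ≤ 2^s *
      ((if 1 ≤ ‖z‖ then (1+‖z‖^2)^(s/2) else 0) + (1+‖ξ-z‖^2)^(s/2)) := by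
  have hn1 : ‖ξ‖ ≤ ‖z‖ + ‖ξ - z‖ := by
    calc ‖ξ‖ = ‖z + (ξ - z)‖ := by rw [add_sub_cancel]
      _ ≤ ‖z‖ + ‖ξ - z‖ := norm_add_le _ _
  have hvpos : (0:ℝ) ≤ (1+‖ξ-z‖^2)^(s/2) := Real.rpow_nonneg (by positivity) _
  have hA : (0:ℝ) ≤ 1+‖ξ‖^2 := by positivity
  have h2pos : (0:ℝ) ≤ (2:ℝ)^s := Real.rpow_nonneg (by norm_num) s
  by_cases hz : 1 ≤ ‖z‖
  · rw [if_pos hz]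
    have hupos : (0:ℝ) ≤ (1+‖z‖^2)^(s/2) := Real.rpow_nonneg (by positivity) _
    rcases le_total ‖z‖ ‖ξ - z‖ with h | h
    · have hn2 : ‖ξ‖ ≤ 2*‖ξ-z‖ := by linarith
      have hn3 : ‖ξ‖^2 ≤ 4*‖ξ-z‖^2 := by nlinarith [norm_nonneg ξ, norm_nonneg (ξ-z)]
      have hb : 1+‖ξ‖^2 ≤ 4*(1+‖ξ-z‖^2) := by linarith
      have := pow_bound hs hA (by positivity) hb
      nlinarith
    · have hn2 : ‖ξ‖ ≤ 2*‖z‖ := by linarith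
      have hn3 : ‖ξ‖^2 ≤ 4*‖z‖^2 := by nlinarith [norm_nonneg ξ, norm_nonneg z]
      have hb : 1+‖ξ‖^2 ≤ 4*(1+‖z‖^2) := by linarith
      have := pow_bound hs hA (by positivity) hb
      nlinarith
  · rw [if_neg hz]
    push_neg at hz
    have hn2 : ‖ξ‖ ≤ 1 + ‖ξ-z‖ := by linarith
    have hn3 : ‖ξ‖^2 ≤ (1+‖ξ-z‖)^2 := by nlinarith [norm_nonneg ξ, norm_nonneg (ξ-z)]
    have hb : 1+‖ξ‖^2 ≤ 4*(1+‖ξ-z‖^2) := by nlinarith [sq_nonneg (‖ξ-z‖-1)]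
    have := pow_bound hs hA (by positivity) hb
    nlinarith

lemma W_inv_finite {s : ℝ} (hs : (d:ℝ)/2 < s) :
    ∫⁻ ξ : V, ENNReal.ofReal ((1+‖ξ‖^2)^(-s)) < ∞ := by
  have hs0 : 0 < s := lt_of_le_of_lt (by positivity) hs
  have hint : Integrable (fun ξ : V => (1+‖ξ‖)^(-(2*s))) := by
    apply integrable_one_add_norm
    rw [finrank_euclideanSpace_fin]
    linarith
  have hptw : ∀ ξ : V, (1+‖ξ‖^2)^(-s) ≤ 2^s * (1+‖ξ‖)^(-(2*s)) := by
    intro ξ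
    have h1 : (0:ℝ) < 1+‖ξ‖ := by positivity
    have h2 : (0:ℝ) < 1+‖ξ‖^2 := by positivity
    have pa : (0:ℝ) < (1+‖ξ‖^2)^s := Real.rpow_pos_of_pos h2 s
    have pb : (0:ℝ) < (1+‖ξ‖)^(2*s) := Real.rpow_pos_of_pos h1 _
    have p2 : (0:ℝ) < (2:ℝ)^s := Real.rpow_pos_of_pos (by norm_num) s
    have key : (1+‖ξ‖)^(2*s) ≤ 2^s * (1+‖ξ‖^2)^s := by
      have hb : (1+‖ξ‖)^(2:ℕ) ≤ 2*(1+‖ξ‖^2) := by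
        nlinarith [sq_nonneg (1-‖ξ‖), norm_nonneg ξ]
      calc (1+‖ξ‖)^(2*s) = ((1+‖ξ‖)^(2:ℕ))^s := by
            rw [← Real.rpow_natCast (1+‖ξ‖) 2, ← Real.rpow_mul (le_of_lt h1)]
            norm_num
        _ ≤ (2*(1+‖ξ‖^2))^s := Real.rpow_le_rpow (by positivity) hb (le_of_lt hs0)
        _ = 2^s * (1+‖ξ‖^2)^s := Real.mul_rpow (by norm_num) (le_of_lt h2)
    rw [Real.rpow_neg (le_of_lt h2), Real.rpow_neg (le_of_lt h1)]
    have hd2 : (1+‖ξ‖)^(2*s) / 2^s ≤ (1+‖ξ‖^2)^s := by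
      rw [div_le_iff₀ p2]; linarith [key]
    calc ((1+‖ξ‖^2)^s)⁻¹ ≤ ((1+‖ξ‖)^(2*s) / 2^s)⁻¹ :=
          inv_anti₀ (by positivity) hd2
      _ = 2^s * ((1+‖ξ‖)^(2*s))⁻¹ := by rw [inv_div, div_eq_mul_inv]
  calc ∫⁻ ξ : V, ENNReal.ofReal ((1+‖ξ‖^2)^(-s))
      ≤ ∫⁻ ξ : V, ENNReal.ofReal (2^s * (1+‖ξ‖)^(-(2*s))) :=
        lintegral_mono fun ξ => ENNReal.ofReal_le_ofReal (hptw ξ)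
    _ = ∫⁻ ξ : V, ENNReal.ofReal (2^s) * ENNReal.ofReal ((1+‖ξ‖)^(-(2*s))) := by
        exact lintegral_congr fun ξ =>
          ENNReal.ofReal_mul (Real.rpow_nonneg (by norm_num) s)
    _ = ENNReal.ofReal (2^s) * ∫⁻ ξ : V, ENNReal.ofReal ((1+‖ξ‖)^(-(2*s))) :=
        lintegral_const_mul' _ _ ENNReal.ofReal_ne_top
    _ < ∞ := by
        refine ENNReal.mul_lt_top ENNReal.ofReal_lt_top ?_
        have h2 := hint.hasFiniteIntegral
        refine lt_of_le_of_lt ?_ h2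
        exact lintegral_mono fun ξ => Real.ofReal_le_enorm _

end Aux1

section Aux2
open Real

lemma lem1d {q : ℝ} (hq : 0 ≤ q) :
    ∫⁻ t : ℝ, ENNReal.ofReal (q/(t^2+q^2)) ≤ ENNReal.ofReal π := by
  rcases eq_or_lt_of_le hq with h | hqpos
  · simp [← h, zero_div]
  have hrw : ∀ t : ℝ, q/(t^2+q^2) = q⁻¹ * (1 + (q⁻¹*t)^2)⁻¹ := by
    intro t
    have hq2 : q^2 > 0 := by positivity
    field_simp
    ring
  refine le_of_eq ?_
  calc ∫⁻ t : ℝ, ENNReal.ofReal (q/(t^2+q^2))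
      = ∫⁻ t : ℝ, ENNReal.ofReal q⁻¹ * ENNReal.ofReal ((1 + (q⁻¹*t)^2)⁻¹) := by
        refine lintegral_congr fun t => ?_
        rw [hrw t, ENNReal.ofReal_mul (by positivity)]
    _ = ENNReal.ofReal q⁻¹ * ∫⁻ t : ℝ, ENNReal.ofReal ((1 + (q⁻¹*t)^2)⁻¹) :=
        lintegral_const_mul' _ _ ENNReal.ofReal_ne_top
    _ = ENNReal.ofReal q⁻¹ * (ENNReal.ofReal |q| * ∫⁻ u : ℝ, ENNReal.ofReal ((1 + u^2)⁻¹)) := by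
        congr 1
        have hmap : Measure.map (fun t : ℝ => q⁻¹ * t) volume
            = ENNReal.ofReal |(q⁻¹)⁻¹| • volume := Real.map_volume_mul_left (by positivity)
        have hlm : ∫⁻ u : ℝ, ENNReal.ofReal ((1 + u^2)⁻¹)
              ∂(Measure.map (fun t : ℝ => q⁻¹ * t) volume)
            = ∫⁻ t : ℝ, ENNReal.ofReal ((1 + (q⁻¹*t)^2)⁻¹) :=
          lintegral_map ((measurable_id.pow_const 2 |>.const_add 1).inv.ennreal_ofReal)
            (measurable_const.mul measurable_id)
        rw [← hlm, hmap]
        simp [lintegral_smul_measure]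
    _ = ENNReal.ofReal q⁻¹ * (ENNReal.ofReal |q| * ENNReal.ofReal π) := by
        congr 2
        rw [← integral_univ_inv_one_add_sq]
        exact (ofReal_integral_eq_lintegral_ofReal integrable_inv_one_add_sq
          (Filter.Eventually.of_forall fun t => by positivity)).symm
    _ = ENNReal.ofReal π := by
        rw [abs_of_pos hqpos, ← mul_assoc, ← ENNReal.ofReal_mul (by positivity),
          inv_mul_cancel₀ (ne_of_gt hqpos)]
        simp

noncomputable def Sn (n : ℕ) (y : Fin n → ℝ) : ℝ := ∑ j, (y j)^2

lemma Sn_nonneg (n : ℕ) (y : Fin n → ℝ) : 0 ≤ Sn n y :=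
  Finset.sum_nonneg fun _ _ => sq_nonneg _

lemma Sn_meas (n : ℕ) : Measurable (Sn n) := by
  apply Finset.measurable_sum
  intro j _
  exact (measurable_pi_apply j).pow_const 2

lemma slab_finite (n : ℕ) :
    ∫⁻ x : Fin (n+1) → ℝ,
      (if Sn n (fun j => x j.succ) ≤ 1 then
        ENNReal.ofReal (Sn n (fun j => x j.succ) /
          ((x 0)^2 + (Sn n (fun j => x j.succ))^2)) else 0) < ∞ := by
  -- peel off coordinate 0
  have mp2 := (volume_preserving_piFinSuccAbove (fun _ : Fin (n+1) => ℝ) 0).symm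
  set e := MeasurableEquiv.piFinSuccAbove (fun _ : Fin (n+1) => ℝ) 0 with he
  have key : ∫⁻ x : Fin (n+1) → ℝ,
      (if Sn n (fun j => x j.succ) ≤ 1 then
        ENNReal.ofReal (Sn n (fun j => x j.succ) /
          ((x 0)^2 + (Sn n (fun j => x j.succ))^2)) else 0)
      = ∫⁻ p : ℝ × (Fin n → ℝ),
        (if Sn n p.2 ≤ 1 then
          ENNReal.ofReal (Sn n p.2 / (p.1^2 + (Sn n p.2)^2)) else 0)
        ∂((volume : Measure ℝ).prod (volume : Measure (Fin n → ℝ))) := by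
    rw [← mp2.lintegral_comp_emb e.symm.measurableEmbedding]
    refine lintegral_congr fun p => ?_
    have h0 : (e.symm p) 0 = p.1 := by
      simp [he, MeasurableEquiv.piFinSuccAbove, Fin.insertNth_apply_same]
    have hsucc : ∀ j : Fin n, (e.symm p) j.succ = p.2 j := by
      intro j
      simp [he, MeasurableEquiv.piFinSuccAbove]
    simp only [h0, hsucc]
  rw [key]
  have hmeas : Measurable fun p : ℝ × (Fin n → ℝ) =>
      (if Sn n p.2 ≤ 1 then
        ENNReal.ofReal (Sn n p.2 / (p.1^2 + (Sn n p.2)^2)) else 0) := by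
    have hS : Measurable fun p : ℝ × (Fin n → ℝ) => Sn n p.2 := (Sn_meas n).comp measurable_snd
    refine Measurable.ite ?_ ?_ measurable_const
    · exact measurableSet_le hS measurable_const
    · exact (hS.div ((measurable_fst.pow_const 2).add (hS.pow_const 2))).ennreal_ofReal
  rw [lintegral_prod _ hmeas.aemeasurable]
  rw [lintegral_lintegral_swap hmeas.aemeasurable]
  have inner_le : ∀ y : Fin n → ℝ,
      (∫⁻ t : ℝ, (if Sn n y ≤ 1 then
        ENNReal.ofReal (Sn n y / (t^2 + (Sn n y)^2)) else 0))
      ≤ Set.indicator {y : Fin n → ℝ | Sn n y ≤ 1} (fun _ => ENNReal.ofReal π) y := by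
    intro y
    by_cases h : Sn n y ≤ 1
    · simp only [if_pos h, Set.indicator_of_mem (show y ∈ {y | Sn n y ≤ 1} from h)]
      exact lem1d (Sn_nonneg n y)
    · simp [if_neg h, Set.indicator_of_notMem (show y ∉ {y | Sn n y ≤ 1} from h)]
  calc ∫⁻ y, ∫⁻ t : ℝ, (if Sn n y ≤ 1 then
        ENNReal.ofReal (Sn n y / (t^2 + (Sn n y)^2)) else 0)
      ≤ ∫⁻ y, Set.indicator {y : Fin n → ℝ | Sn n y ≤ 1} (fun _ => ENNReal.ofReal π) y :=
        lintegral_mono inner_le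
    _ = ENNReal.ofReal π * volume {y : Fin n → ℝ | Sn n y ≤ 1} :=
        lintegral_indicator_const (measurableSet_le (Sn_meas n) measurable_const) _
    _ < ∞ := by
        refine ENNReal.mul_lt_top ENNReal.ofReal_lt_top ?_
        have hsub : {y : Fin n → ℝ | Sn n y ≤ 1} ⊆ Set.pi Set.univ (fun _ => Set.Icc (-1:ℝ) 1) := by
          intro y hy
          intro j _
          have hy' : Sn n y ≤ 1 := hy
          have h1 : (y j)^2 ≤ 1 := by
            have h2 : (y j)^2 ≤ Sn n y := Finset.single_le_sum
              (fun i _ => sq_nonneg (y i)) (Finset.mem_univ j)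
            linarith
          constructor <;> nlinarith
        refine lt_of_le_of_lt (measure_mono hsub) ?_
        rw [volume_pi_pi]
        simp only [Real.volume_Icc, Finset.prod_const, Finset.card_univ, Fintype.card_fin]
        exact ENNReal.pow_lt_top ENNReal.ofReal_lt_top

lemma norm_sq_eq {d : ℕ} (ξ : EuclideanSpace ℝ (Fin d)) : ‖ξ‖^2 = ∑ i, (ξ i)^2 := by
  rw [EuclideanSpace.norm_eq]
  rw [Real.sq_sqrt (Finset.sum_nonneg fun i _ => sq_nonneg _)]
  exact Finset.sum_congr rfl fun i _ => by rw [Real.norm_eq_abs, sq_abs]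

lemma ratio_bound {t q : ℝ} (hq : 0 ≤ q) (hpos : 0 < t^2 + q) :
    (t^2+q)/(t^2+(t^2+q)^2) ≤ 1 + q/(t^2+q^2) := by
  have hD2 : 0 < t^2 + q^2 := by
    rcases eq_or_lt_of_le hq with h | h
    · rw [← h] at hpos ⊢; simpa using hpos
    · positivity
  have hD1 : 0 < t^2 + (t^2+q)^2 :=
    lt_of_lt_of_le (pow_pos hpos 2) (le_add_of_nonneg_left (sq_nonneg t))
  have expand : 1 + q/(t^2+q^2) = (t^2+q^2+q)/(t^2+q^2) := by field_simp
  rw [expand, div_le_div_iff₀ hD1 hD2]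
  nlinarith [sq_nonneg t, sq_nonneg q, sq_nonneg (t^2+q), sq_nonneg (t*q), mul_nonneg hq (sq_nonneg t)]

lemma omega_inv_finite (d : ℕ) (hd : 0 < d) {s : ℝ} (hs : (d:ℝ)/2 < s) :
    ∫⁻ ξ : EuclideanSpace ℝ (Fin d), (ENNReal.ofReal (omegaD d hd s ξ))⁻¹ < ∞ := by
  obtain ⟨n, rfl⟩ := Nat.exists_eq_succ_of_ne_zero hd.ne'
  set V := EuclideanSpace ℝ (Fin (n+1))
  have hi0 : (⟨0, hd⟩ : Fin (n+1)) = 0 := rfl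
  set Q : V → ℝ := fun ξ => ‖ξ‖^2 - (ξ 0)^2 with hQdef
  have hQ : ∀ ξ : V, Q ξ = Sn n (fun j => ξ j.succ) := by
    intro ξ
    rw [hQdef]
    simp only
    rw [norm_sq_eq ξ, Fin.sum_univ_succ]
    simp [Sn]
  have hQ0 : ∀ ξ : V, 0 ≤ Q ξ := fun ξ => by rw [hQ]; exact Sn_nonneg n _
  -- the three majorant pieces
  set I1 : V → ℝ≥0∞ := fun ξ => ENNReal.ofReal ((1+‖ξ‖^2)^(-s)) with hI1
  set I2 : V → ℝ≥0∞ := fun ξ => if ‖ξ‖ ≤ 1 then (1:ℝ≥0∞) else 0 with hI2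
  set I3 : V → ℝ≥0∞ := fun ξ =>
    if Q ξ ≤ 1 then ENNReal.ofReal (Q ξ/((ξ 0)^2+(Q ξ)^2)) else 0 with hI3
  -- a.e. pointwise bound
  haveI : Nontrivial V := by
    refine ⟨EuclideanSpace.single 0 1, 0, fun h => ?_⟩
    have := congrArg norm h
    rw [EuclideanSpace.norm_single, norm_zero, norm_one] at this
    exact one_ne_zero this
  have h0 : ∀ᵐ ξ : V, ξ ≠ 0 := by
    rw [ae_iff]
    have : {ξ : V | ¬ ξ ≠ 0} = {0} := by ext ξ; simp
    rw [this]
    exact measure_singleton 0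
  have haeb : ∀ᵐ ξ : V, (ENNReal.ofReal (omegaD (n+1) hd s ξ))⁻¹ ≤ I1 ξ + (I2 ξ + I3 ξ) := by
    filter_upwards [h0] with ξ hξ
    by_cases hb : ‖ξ‖ < 1
    · have hnorm : 0 < ‖ξ‖ := norm_pos_iff.mpr hξ
      have hom : omegaD (n+1) hd s ξ = ((ξ 0) ^ 2 + ‖ξ‖ ^ 4) / ‖ξ‖ ^ 2 := by
        rw [omegaD, if_pos hb, hi0]
      have hnum : 0 < (ξ 0) ^ 2 + ‖ξ‖ ^ 4 :=
        lt_of_lt_of_le (by positivity) (le_add_of_nonneg_left (sq_nonneg _))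
      have homp : 0 < omegaD (n+1) hd s ξ := by rw [hom]; positivity
      rw [← ENNReal.ofReal_inv_of_pos homp, hom, inv_div]
      -- real inequality
      have hr : ‖ξ‖^2 / ((ξ 0)^2 + ‖ξ‖^4) ≤ 1 + Q ξ/((ξ 0)^2+(Q ξ)^2) := by
        have h1 : ‖ξ‖^2 = (ξ 0)^2 + Q ξ := by rw [hQdef]; ring
        have h2 : ‖ξ‖^4 = ((ξ 0)^2 + Q ξ)^2 := by rw [← h1]; ring
        rw [h1, h2]
        exact ratio_bound (hQ0 ξ) (by rw [← h1]; positivity)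
      calc ENNReal.ofReal (‖ξ‖^2 / ((ξ 0)^2 + ‖ξ‖^4))
          ≤ ENNReal.ofReal (1 + Q ξ/((ξ 0)^2+(Q ξ)^2)) := ENNReal.ofReal_le_ofReal hr
        _ = 1 + ENNReal.ofReal (Q ξ/((ξ 0)^2+(Q ξ)^2)) := by
            rw [ENNReal.ofReal_add (by norm_num) (div_nonneg (hQ0 ξ) (by positivity)),
              ENNReal.ofReal_one]
        _ ≤ I2 ξ + I3 ξ := by
            have hQ1 : Q ξ ≤ 1 := by
              have h1 : Q ξ ≤ ‖ξ‖^2 := sub_le_self _ (sq_nonneg _)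
              nlinarith [norm_nonneg ξ]
            rw [hI2, hI3]
            simp only
            rw [if_pos (le_of_lt hb), if_pos hQ1]
        _ ≤ I1 ξ + (I2 ξ + I3 ξ) := le_add_self
    · have hom : omegaD (n+1) hd s ξ = (1 + ‖ξ‖ ^ 2) ^ s := by rw [omegaD, if_neg hb]
      have hp : (0:ℝ) < (1 + ‖ξ‖ ^ 2) ^ s := Real.rpow_pos_of_pos (by positivity) s
      have : (ENNReal.ofReal (omegaD (n+1) hd s ξ))⁻¹ = I1 ξ := by
        rw [hom, ← ENNReal.ofReal_inv_of_pos hp, hI1]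
        simp only
        rw [Real.rpow_neg (by positivity)]
      rw [this]
      exact le_add_of_nonneg_right zero_le
  -- measurability
  have hcoord : Measurable fun ξ : V => ξ 0 :=
    (measurable_pi_apply (0 : Fin (n+1))).comp
      ((MeasurableEquiv.toLp 2 (Fin (n+1) → ℝ)).symm).measurable
  have hQm : Measurable Q := by
    apply Measurable.sub
    · exact (measurable_norm.pow_const 2)
    · exact hcoord.pow_const 2
  have hI1m : Measurable I1 := by
    apply Measurable.ennreal_ofReal
    exact ((measurable_norm.pow_const 2).const_add 1).pow measurable_const
  have hI2m : Measurable I2 := by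
    refine Measurable.ite ?_ measurable_const measurable_const
    exact measurableSet_le measurable_norm measurable_const
  calc ∫⁻ ξ : V, (ENNReal.ofReal (omegaD (n+1) hd s ξ))⁻¹
      ≤ ∫⁻ ξ : V, (I1 ξ + (I2 ξ + I3 ξ)) := lintegral_mono_ae haeb
    _ = (∫⁻ ξ : V, I1 ξ) + ((∫⁻ ξ : V, I2 ξ) + ∫⁻ ξ : V, I3 ξ) := by
        rw [lintegral_add_left hI1m, lintegral_add_left hI2m]
    _ < ∞ := by
        refine ENNReal.add_lt_top.mpr ⟨W_inv_finite hs, ENNReal.add_lt_top.mpr ⟨?_, ?_⟩⟩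
        · -- ball volume
          have : (fun ξ : V => if ‖ξ‖ ≤ 1 then (1:ℝ≥0∞) else 0)
              = Set.indicator (Metric.closedBall (0:V) 1) (fun _ => 1) := by
            funext ξ
            by_cases h : ‖ξ‖ ≤ 1 <;>
              simp [Set.indicator_apply, Metric.mem_closedBall, dist_zero_right, h]
          rw [hI2, this, lintegral_indicator_const measurableSet_closedBall]
          exact ENNReal.mul_lt_top ENNReal.one_lt_top
            (IsCompact.measure_lt_top (isCompact_closedBall 0 1))
        · -- slab part : transfer to the Pi integral
          have hMP := EuclideanSpace.volume_preserving_symm_measurableEquiv_toLp (Fin (n+1))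
          have htrans := hMP.lintegral_comp_emb
            ((MeasurableEquiv.toLp 2 (Fin (n+1) → ℝ)).symm).measurableEmbedding
            (fun x : Fin (n+1) → ℝ =>
              if Sn n (fun j => x j.succ) ≤ 1 then
                ENNReal.ofReal (Sn n (fun j => x j.succ) /
                  ((x 0)^2 + (Sn n (fun j => x j.succ))^2)) else 0)
          have heq : ∫⁻ ξ : V, I3 ξ
              = ∫⁻ x : Fin (n+1) → ℝ,
                (if Sn n (fun j => x j.succ) ≤ 1 then
                  ENNReal.ofReal (Sn n (fun j => x j.succ) /
                    ((x 0)^2 + (Sn n (fun j => x j.succ))^2)) else 0) := by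
            rw [← htrans]
            refine lintegral_congr fun ξ => ?_
            have hc : ∀ i : Fin (n+1), ((MeasurableEquiv.toLp 2 (Fin (n+1) → ℝ)).symm ξ) i = ξ i :=
              fun i => rfl
            rw [hI3]
            simp only [hc, ← hQ ξ]
          rw [heq]
          exact slab_finite n

end Aux2

section Main
variable {d : ℕ}
local notation "V" => EuclideanSpace ℝ (Fin d)

lemma ennreal_add_sq_le (X Y : ℝ≥0∞) : (X+Y)^(2:ℕ) ≤ 4*(X^(2:ℕ)+Y^(2:ℕ)) := by
  have h1 : X + Y ≤ 2 * max X Y := by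
    rcases le_total X Y with h | h
    · calc X + Y ≤ Y + Y := add_le_add_left h Y
        _ = 2 * Y := (two_mul Y).symm
        _ ≤ 2 * max X Y := mul_le_mul_right (le_max_right X Y) 2
    · calc X + Y ≤ X + X := add_le_add_right h X
        _ = 2 * X := (two_mul X).symm
        _ ≤ 2 * max X Y := mul_le_mul_right (le_max_left X Y) 2
  calc (X+Y)^(2:ℕ) ≤ (2*max X Y)^(2:ℕ) := pow_le_pow_left' h1 2
    _ = 4 * (max X Y)^(2:ℕ) := by rw [mul_pow]; norm_num
    _ ≤ 4*(X^(2:ℕ)+Y^(2:ℕ)) := by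
        refine mul_le_mul_right ?_ 4
        rcases le_total X Y with h | h
        · rw [max_eq_right h]; exact le_add_self
        · rw [max_eq_left h]; exact self_le_add_right _ _

variable (hd : 0 < d) {s : ℝ}

lemma nontrivial_V (hd : 0 < d) : Nontrivial V := by
  refine ⟨EuclideanSpace.single ⟨0, hd⟩ 1, 0, fun h => ?_⟩
  have := congrArg norm h
  rw [EuclideanSpace.norm_single, norm_zero, norm_one] at this
  exact one_ne_zero this

lemma omega_pos_ae (hd : 0 < d) (hs0 : 0 ≤ s) :
    ∀ᵐ ξ : V, ENNReal.ofReal (omegaD d hd s ξ) ≠ 0 := by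
  haveI := nontrivial_V hd
  have h0 : ∀ᵐ ξ : V, ξ ≠ 0 := by
    rw [ae_iff]
    have : {ξ : V | ¬ ξ ≠ 0} = {0} := by ext ξ; simp
    rw [this]
    exact measure_singleton 0
  filter_upwards [h0] with ξ hξ
  rw [ne_eq, ENNReal.ofReal_eq_zero, not_le]
  rw [omegaD]
  split_ifs with hb
  · have hnorm : 0 < ‖ξ‖ := norm_pos_iff.mpr hξ
    have : (0:ℝ) < (ξ ⟨0,hd⟩)^2 + ‖ξ‖^4 :=
      lt_of_lt_of_le (by positivity) (le_add_of_nonneg_left (sq_nonneg _))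
    positivity
  · exact Real.rpow_pos_of_pos (by positivity) s

/-- The core multiplier estimate over nonnegative Fourier profiles. -/
lemma core (hd : 0 < d) (hs : (d:ℝ)/2 < s) (φ γ : V → ℝ≥0∞)
    (hφ : Measurable φ) (hγ : Measurable γ) :
    ∫⁻ ξ, ENNReal.ofReal ((1+‖ξ‖^2)^s) * (∫⁻ z, φ z * γ (ξ - z)) ^ (2:ℕ)
      ≤ (ENNReal.ofReal (2^s))^(2:ℕ) * 4 *
          ((∫⁻ ξ : V, (ENNReal.ofReal ((1+‖ξ‖^2)^s))⁻¹)
            + ∫⁻ ξ : V, (ENNReal.ofReal (omegaD d hd s ξ))⁻¹) *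
        (∫⁻ ξ, ENNReal.ofReal (omegaD d hd s ξ) * (φ ξ) ^ (2:ℕ)) *
        (∫⁻ ξ, ENNReal.ofReal ((1+‖ξ‖^2)^s) * (γ ξ) ^ (2:ℕ)) := by
  have hs0 : (0:ℝ) ≤ s := le_of_lt (lt_of_le_of_lt (by positivity) hs)
  set Hen : V → ℝ≥0∞ := fun ξ => ENNReal.ofReal ((1+‖ξ‖^2)^(s/2)) with hHen
  set W : V → ℝ≥0∞ := fun ξ => ENNReal.ofReal ((1+‖ξ‖^2)^s) with hW
  set Om : V → ℝ≥0∞ := fun ξ => ENNReal.ofReal (omegaD d hd s ξ) with hOm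
  set U : V → ℝ≥0∞ := fun z => if 1 ≤ ‖z‖ then Hen z else 0 with hU
  set K : ℝ≥0∞ := ENNReal.ofReal (2^s) with hK
  set A := ∫⁻ ξ, Om ξ * (φ ξ) ^ (2:ℕ) with hA
  set B := ∫⁻ ξ, W ξ * (γ ξ) ^ (2:ℕ) with hB
  set MW := ∫⁻ ξ : V, (W ξ)⁻¹ with hMW
  set MOm := ∫⁻ ξ : V, (Om ξ)⁻¹ with hMOm
  -- basic pointwise facts
  have hWHen : ∀ ξ : V, W ξ = (Hen ξ)^(2:ℕ) := by
    intro ξ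
    rw [hW, hHen]
    simp only
    rw [← ENNReal.ofReal_pow (Real.rpow_nonneg (by positivity) _)]
    congr 1
    rw [← Real.rpow_natCast ((1+‖ξ‖^2)^(s/2)) 2, ← Real.rpow_mul (by positivity)]
    norm_num
  have hHm : Measurable Hen :=
    (((measurable_norm.pow_const 2).const_add 1).pow measurable_const).ennreal_ofReal
  have hUm : Measurable U := by
    refine Measurable.ite ?_ hHm measurable_const
    exact measurableSet_le measurable_const measurable_norm
  have hWm : Measurable W :=
    (((measurable_norm.pow_const 2).const_add 1).pow measurable_const).ennreal_ofReal
  -- pointwise weight inequality, ENNReal form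
  have hpt : ∀ ξ z : V, Hen ξ ≤ K * (U z + Hen (ξ - z)) := by
    intro ξ z
    have := weight_ptwise (d := d) hs0 ξ z
    calc Hen ξ ≤ ENNReal.ofReal (2^s *
        ((if 1 ≤ ‖z‖ then (1+‖z‖^2)^(s/2) else 0) + (1+‖ξ-z‖^2)^(s/2))) :=
          ENNReal.ofReal_le_ofReal this
      _ = K * (U z + Hen (ξ - z)) := by
          rw [ENNReal.ofReal_mul (by positivity),
            ENNReal.ofReal_add (by positivity) (by positivity)]
          congr 2
          rw [hU]
          simp only
          rw [apply_ite ENNReal.ofReal, ENNReal.ofReal_zero]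
  -- step 2
  have hstep2 : ∀ ξ : V, Hen ξ * (∫⁻ z, φ z * γ (ξ - z))
      ≤ K * ((∫⁻ z, (U z * φ z) * γ (ξ - z)) + ∫⁻ z, φ z * (Hen (ξ - z) * γ (ξ - z))) := by
    intro ξ
    have hin : Measurable fun z : V => φ z * γ (ξ - z) :=
      hφ.mul (hγ.comp (measurable_const.sub measurable_id))
    calc Hen ξ * (∫⁻ z, φ z * γ (ξ - z))
        = ∫⁻ z, Hen ξ * (φ z * γ (ξ - z)) := (lintegral_const_mul _ hin).symm
      _ ≤ ∫⁻ z, (K * (U z + Hen (ξ - z))) * (φ z * γ (ξ - z)) :=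
          lintegral_mono fun z => mul_le_mul_left (hpt ξ z) _
      _ = K * ∫⁻ z, (U z + Hen (ξ - z)) * (φ z * γ (ξ - z)) := by
          simp_rw [mul_assoc]
          exact lintegral_const_mul' _ _ ENNReal.ofReal_ne_top
      _ = K * ((∫⁻ z, (U z * φ z) * γ (ξ - z)) + ∫⁻ z, φ z * (Hen (ξ - z) * γ (ξ - z))) := by
          congr 1
          have hm1 : Measurable fun z : V => (U z * φ z) * γ (ξ - z) := by
            exact (hUm.mul hφ).mul (hγ.comp (measurable_const.sub measurable_id))
          rw [← lintegral_add_left hm1]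
          exact lintegral_congr fun z => by ring
  -- step 3/4
  have hmain : ∫⁻ ξ, W ξ * (∫⁻ z, φ z * γ (ξ - z)) ^ (2:ℕ)
      ≤ K^(2:ℕ) * 4 * ((∫⁻ ξ, (∫⁻ z, (U z * φ z) * γ (ξ - z)) ^ (2:ℕ))
        + ∫⁻ ξ, (∫⁻ z, φ z * ((Hen * γ) (ξ - z))) ^ (2:ℕ)) := by
    calc ∫⁻ ξ, W ξ * (∫⁻ z, φ z * γ (ξ - z)) ^ (2:ℕ)
        = ∫⁻ ξ, (Hen ξ * ∫⁻ z, φ z * γ (ξ - z)) ^ (2:ℕ) := by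
          refine lintegral_congr fun ξ => ?_
          rw [mul_pow, hWHen ξ]
      _ ≤ ∫⁻ ξ, (K * ((∫⁻ z, (U z * φ z) * γ (ξ - z))
            + ∫⁻ z, φ z * (Hen (ξ - z) * γ (ξ - z)))) ^ (2:ℕ) :=
          lintegral_mono fun ξ => pow_le_pow_left' (hstep2 ξ) 2
      _ ≤ ∫⁻ ξ, K^(2:ℕ) * (4 * ((∫⁻ z, (U z * φ z) * γ (ξ - z)) ^ (2:ℕ)
            + (∫⁻ z, φ z * (Hen (ξ - z) * γ (ξ - z))) ^ (2:ℕ))) := by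
          refine lintegral_mono fun ξ => ?_
          rw [mul_pow]
          exact mul_le_mul_right (ennreal_add_sq_le _ _) _
      _ = K^(2:ℕ) * 4 * ((∫⁻ ξ, (∫⁻ z, (U z * φ z) * γ (ξ - z)) ^ (2:ℕ))
            + ∫⁻ ξ, (∫⁻ z, φ z * ((Hen * γ) (ξ - z))) ^ (2:ℕ)) := by
          rw [lintegral_const_mul' _ _ (ENNReal.pow_ne_top ENNReal.ofReal_ne_top)]
          rw [mul_assoc (K^(2:ℕ)) 4]
          congr 1
          rw [lintegral_const_mul' (4:ℝ≥0∞) _ (by norm_num)]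
          congr 1
          have hPm : Measurable fun ξ : V => (∫⁻ z, (U z * φ z) * γ (ξ - z)) ^ (2:ℕ) := by
            have h1 : Measurable fun ξ : V => ∫⁻ z, (U z * φ z) * γ (ξ - z) :=
              Measurable.lintegral_prod_right
                (((hUm.mul hφ).comp measurable_snd).mul (hγ.comp (measurable_fst.sub measurable_snd)))
            exact h1.pow_const 2
          rw [← lintegral_add_left hPm]
          exact lintegral_congr fun ξ => rfl
  -- conclude
  have hOmM : Measurable Om := by
    rw [hOm]
    apply Measurable.ennreal_ofReal
    unfold omegaD
    refine Measurable.ite (measurableSet_lt measurable_norm measurable_const) ?_ ?_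
    · refine Measurable.div ?_ (measurable_norm.pow_const 2)
      refine Measurable.add ?_ (measurable_norm.pow_const 4)
      exact ((measurable_pi_apply _).comp
        ((MeasurableEquiv.toLp 2 (Fin d → ℝ)).symm).measurable).pow_const 2
    · exact ((measurable_norm.pow_const 2).const_add 1).pow measurable_const
  have hP2 := young2 (fun z => U z * φ z) γ (hUm.mul hφ) hγ
  have hQ2 := young1 φ (Hen * γ) hφ (hHm.mul hγ)
  have hUφ : (∫⁻ z, (U z * φ z) ^ (2:ℕ)) ≤ A := by
    refine lintegral_mono fun z => ?_
    rw [mul_pow]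
    refine mul_le_mul_left ?_ _
    rw [hU]
    beta_reduce
    split_ifs with h1
    · rw [← hWHen z, hW, hOm]
      simp only
      rw [omegaD, if_neg (not_lt.mpr h1)]
    · simp
  have hHγ : (∫⁻ z, ((Hen * γ) z) ^ (2:ℕ)) = B := by
    refine lintegral_congr fun z => ?_
    rw [Pi.mul_apply, mul_pow, ← hWHen]
  have hγ1 : (∫⁻ z, γ z) ^ (2:ℕ) ≤ MW * B := by
    refine weighted_cs W γ hWm hγ (ae_of_all _ fun ξ => ?_) (fun ξ => ENNReal.ofReal_ne_top)
    rw [hW]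
    simp only [ne_eq, ENNReal.ofReal_eq_zero, not_le]
    exact Real.rpow_pos_of_pos (by positivity) s
  have hφ1 : (∫⁻ z, φ z) ^ (2:ℕ) ≤ MOm * A := by
    refine weighted_cs Om φ hOmM hφ ?_ (fun ξ => ENNReal.ofReal_ne_top)
    exact omega_pos_ae hd hs0
  refine le_trans hmain ?_
  have h1 : (∫⁻ ξ, (∫⁻ z, (U z * φ z) * γ (ξ - z)) ^ (2:ℕ))
      + (∫⁻ ξ, (∫⁻ z, φ z * ((Hen * γ) (ξ - z))) ^ (2:ℕ)) ≤ (MW + MOm) * A * B := by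
    calc (∫⁻ ξ, (∫⁻ z, (U z * φ z) * γ (ξ - z)) ^ (2:ℕ))
        + (∫⁻ ξ, (∫⁻ z, φ z * ((Hen * γ) (ξ - z))) ^ (2:ℕ))
        ≤ (MW * B) * A + (MOm * A) * B := by
          refine add_le_add (hP2.trans (mul_le_mul' hγ1 hUφ)) (hQ2.trans ?_)
          rw [hHγ]
          exact mul_le_mul' hφ1 le_rfl
      _ = (MW + MOm) * A * B := by ring
  calc K^(2:ℕ) * 4 * ((∫⁻ ξ, (∫⁻ z, (U z * φ z) * γ (ξ - z)) ^ (2:ℕ))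
        + (∫⁻ ξ, (∫⁻ z, φ z * ((Hen * γ) (ξ - z))) ^ (2:ℕ)))
      ≤ K^(2:ℕ) * 4 * ((MW + MOm) * A * B) := mul_le_mul_right h1 _
    _ = K^(2:ℕ) * 4 * (MW + MOm) * A * B := by ring

end Main

/-- Fourier-side formulation; `F = f̂`, `G = ĝ`, and the Fourier
transform of the pointwise product `fg` is the convolution `F ∗ G`.  For `s > d/2` there
is `c = c(d,s) > 0` with `‖fg‖_{H^s} ≤ c ‖f‖_{X^s} ‖g‖_{H^s}` for all `f ∈ X^s(ℝ^d)` and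
`g ∈ H^s(ℝ^d)` (stated with squared norms). -/
theorem stmt_14 (d : ℕ) (hd : 0 < d) (s : ℝ) (hs : (d : ℝ) / 2 < s) :
    ∃ c : ℝ, 0 < c ∧
      ∀ F G : EuclideanSpace ℝ (Fin d) → ℂ, AEMeasurable F → AEMeasurable G →
        (∫⁻ ξ, ENNReal.ofReal ((1 + ‖ξ‖ ^ 2) ^ s) *
            (‖∫ z, F z * G (ξ - z)‖₊ : ℝ≥0∞) ^ 2)
          ≤ ENNReal.ofReal (c ^ 2) *
              (∫⁻ ξ, ENNReal.ofReal (omegaD d hd s ξ) * (‖F ξ‖₊ : ℝ≥0∞) ^ 2) *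
              (∫⁻ ξ, ENNReal.ofReal ((1 + ‖ξ‖ ^ 2) ^ s) * (‖G ξ‖₊ : ℝ≥0∞) ^ 2) := by
  classical
  set Ct : ℝ≥0∞ := (ENNReal.ofReal (2^s))^(2:ℕ) * 4 *
      ((∫⁻ ξ : EuclideanSpace ℝ (Fin d), (ENNReal.ofReal ((1+‖ξ‖^2)^s))⁻¹)
        + ∫⁻ ξ : EuclideanSpace ℝ (Fin d), (ENNReal.ofReal (omegaD d hd s ξ))⁻¹) with hCt
  have hMWfin : (∫⁻ ξ : EuclideanSpace ℝ (Fin d), (ENNReal.ofReal ((1+‖ξ‖^2)^s))⁻¹) < ∞ := by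
    have heq : ∀ ξ : EuclideanSpace ℝ (Fin d),
        (ENNReal.ofReal ((1+‖ξ‖^2)^s))⁻¹ = ENNReal.ofReal ((1+‖ξ‖^2)^(-s)) := by
      intro ξ
      rw [Real.rpow_neg (by positivity),
        ← ENNReal.ofReal_inv_of_pos (Real.rpow_pos_of_pos (by positivity) s)]
    rw [lintegral_congr heq]
    exact W_inv_finite hs
  have hCtne : Ct ≠ ∞ := by
    rw [hCt]
    refine ENNReal.mul_ne_top (ENNReal.mul_ne_top ?_ ?_) ?_
    · exact ENNReal.pow_ne_top ENNReal.ofReal_ne_top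
    · norm_num
    · exact (ENNReal.add_lt_top.mpr ⟨hMWfin, omega_inv_finite d hd hs⟩).ne
  refine ⟨Real.sqrt Ct.toReal + 1, by positivity, ?_⟩
  intro F G hF hG
  have hCc : Ct ≤ ENNReal.ofReal ((Real.sqrt Ct.toReal + 1)^2) := by
    conv_lhs => rw [← ENNReal.ofReal_toReal hCtne]
    apply ENNReal.ofReal_le_ofReal
    have h0 : 0 ≤ Ct.toReal := ENNReal.toReal_nonneg
    nlinarith [Real.sq_sqrt h0, Real.sqrt_nonneg Ct.toReal]
  set F' := hF.mk F with hF'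
  set G' := hG.mk G with hG'
  have hFm := hF.measurable_mk
  have hGm := hG.measurable_mk
  set φ : EuclideanSpace ℝ (Fin d) → ℝ≥0∞ := fun z => (‖F' z‖₊ : ℝ≥0∞) with hφd
  set γ : EuclideanSpace ℝ (Fin d) → ℝ≥0∞ := fun z => (‖G' z‖₊ : ℝ≥0∞) with hγd
  have hφ : Measurable φ := hFm.nnnorm.coe_nnreal_ennreal
  have hγ : Measurable γ := hGm.nnnorm.coe_nnreal_ennreal
  have hconv : ∀ ξ : EuclideanSpace ℝ (Fin d),
      ((‖∫ z, F z * G (ξ - z)‖₊ : ℝ≥0∞)) ≤ ∫⁻ z, φ z * γ (ξ - z) := by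
    intro ξ
    have he : (∫ z, F z * G (ξ - z)) = ∫ z, F' z * G' (ξ - z) := by
      refine integral_congr_ae ?_
      have h1 : F =ᵐ[volume] F' := hF.ae_eq_mk
      have h2 : (fun z : EuclideanSpace ℝ (Fin d) => G (ξ - z))
          =ᵐ[volume] fun z => G' (ξ - z) :=
        (mp_sub_left ξ).quasiMeasurePreserving.ae_eq_comp hG.ae_eq_mk
      exact h1.mul h2
    rw [he]
    refine le_trans (enorm_integral_le_lintegral_enorm _) ?_
    refine le_of_eq (lintegral_congr fun z => ?_)
    rw [enorm_mul]; rfl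
  have hRF : (∫⁻ ξ, ENNReal.ofReal (omegaD d hd s ξ) * ((‖F ξ‖₊:ℝ≥0∞)) ^ (2:ℕ))
      = ∫⁻ ξ, ENNReal.ofReal (omegaD d hd s ξ) * (φ ξ) ^ (2:ℕ) := by
    refine lintegral_congr_ae ?_
    filter_upwards [hF.ae_eq_mk] with ξ hξ
    rw [hφd]
    simp only
    rw [hξ]
  have hRG : (∫⁻ ξ, ENNReal.ofReal ((1+‖ξ‖^2)^s) * ((‖G ξ‖₊:ℝ≥0∞)) ^ (2:ℕ))
      = ∫⁻ ξ, ENNReal.ofReal ((1+‖ξ‖^2)^s) * (γ ξ) ^ (2:ℕ) := by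
    refine lintegral_congr_ae ?_
    filter_upwards [hG.ae_eq_mk] with ξ hξ
    rw [hγd]
    simp only
    rw [hξ]
  calc ∫⁻ ξ, ENNReal.ofReal ((1 + ‖ξ‖ ^ 2) ^ s) * (‖∫ z, F z * G (ξ - z)‖₊ : ℝ≥0∞) ^ (2:ℕ)
      ≤ ∫⁻ ξ, ENNReal.ofReal ((1 + ‖ξ‖ ^ 2) ^ s) * (∫⁻ z, φ z * γ (ξ - z)) ^ (2:ℕ) :=
        lintegral_mono fun ξ => mul_le_mul_right (pow_le_pow_left' (hconv ξ) 2) _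
    _ ≤ Ct * (∫⁻ ξ, ENNReal.ofReal (omegaD d hd s ξ) * (φ ξ) ^ (2:ℕ)) *
          (∫⁻ ξ, ENNReal.ofReal ((1+‖ξ‖^2)^s) * (γ ξ) ^ (2:ℕ)) := core hd hs φ γ hφ hγ
    _ ≤ ENNReal.ofReal ((Real.sqrt Ct.toReal + 1)^2) *
          (∫⁻ ξ, ENNReal.ofReal (omegaD d hd s ξ) * (φ ξ) ^ (2:ℕ)) *
          (∫⁻ ξ, ENNReal.ofReal ((1+‖ξ‖^2)^s) * (γ ξ) ^ (2:ℕ)) :=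
        mul_le_mul_left (mul_le_mul_left hCc _) _
    _ = ENNReal.ofReal ((Real.sqrt Ct.toReal + 1)^2) *
          (∫⁻ ξ, ENNReal.ofReal (omegaD d hd s ξ) * (‖F ξ‖₊ : ℝ≥0∞) ^ (2:ℕ)) *
          (∫⁻ ξ, ENNReal.ofReal ((1 + ‖ξ‖ ^ 2) ^ s) * (‖G ξ‖₊ : ℝ≥0∞) ^ (2:ℕ)) := by
        rw [hRF, hRG]
end
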